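/- arXiv:1602.07720 — 2 statements merged into one kernel-verified Lean document; each statement's English description precedes it below -/
import Mathlib

section
/- For every probability measure μ on bid vectors (possibly correlated) and every reserve vector r, the expected eager revenue with reserves r is at most twice the supremum over all reserve vectors r' of the expected lazy revenue: E_μ[RevE(·, r)] ≤ 2 · sup_{r'} E_μ[RevL(·, r')]. In particular the optimal expected eager revenue is at most twice the optimal expected lazy revenue. -/
open MeasureTheory Finset
open scoped Classical ENNReal

noncomputable def lazyWinner {n : ℕ} (b : Fin (n + 1) → ℝ) : Fin (n + 1) :=
  (Finset.univ.filter fun i => ∀ j, b j ≤ b i).min' (by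
    obtain ⟨i, -, hi⟩ := Finset.exists_max_image Finset.univ b ⟨0, Finset.mem_univ 0⟩
    exact ⟨i, Finset.mem_filter.mpr ⟨Finset.mem_univ i, fun j => hi j (Finset.mem_univ j)⟩⟩)

noncomputable def secondMax {n : ℕ} (b : Fin (n + 1) → ℝ) : ℝ :=
  (Finset.univ.erase (lazyWinner b)).fold max 0 b

/-- Revenue of the second price auction with lazy reserves. -/
noncomputable def lazyRev {n : ℕ} (b r : Fin (n + 1) → ℝ) : ℝ :=
  if r (lazyWinner b) ≤ b (lazyWinner b) then max (r (lazyWinner b)) (secondMax b) else 0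

/-- The least-index bidder among those meeting their reserve attaining the highest bid. -/
noncomputable def eagerWinner {n : ℕ} (b r : Fin (n + 1) → ℝ)
    (hS : (Finset.univ.filter fun i => r i ≤ b i).Nonempty) : Fin (n + 1) :=
  ((Finset.univ.filter fun i => r i ≤ b i).filter
      fun i => ∀ k ∈ Finset.univ.filter (fun i => r i ≤ b i), b k ≤ b i).min' (by
    obtain ⟨i, hi, hmax⟩ := Finset.exists_max_image _ b hS
    exact ⟨i, Finset.mem_filter.mpr ⟨hi, hmax⟩⟩)

/-- Revenue of the second price auction with eager reserves. -/
noncomputable def eagerRev {n : ℕ} (b r : Fin (n + 1) → ℝ) : ℝ :=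
  if hS : (Finset.univ.filter fun i => r i ≤ b i).Nonempty then
    max (r (eagerWinner b r hS))
      (((Finset.univ.filter fun i => r i ≤ b i).erase (eagerWinner b r hS)).fold max 0 b)
  else 0
section Aux
variable {n : ℕ}

lemma lazyWinner_mem (b : Fin (n + 1) → ℝ) :
    lazyWinner b ∈ Finset.univ.filter fun i => ∀ j, b j ≤ b i :=
  Finset.min'_mem _ _

lemma lazyWinner_spec (b : Fin (n + 1) → ℝ) : ∀ j, b j ≤ b (lazyWinner b) :=
  (Finset.mem_filter.mp (lazyWinner_mem b)).2

lemma lazyWinner_min (b : Fin (n + 1) → ℝ) {i : Fin (n + 1)} (hi : ∀ j, b j ≤ b i) :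
    lazyWinner b ≤ i :=
  Finset.min'_le _ _ (Finset.mem_filter.mpr ⟨Finset.mem_univ _, hi⟩)

lemma fold_max_mem_le {s : Finset (Fin (n + 1))} {b : Fin (n + 1) → ℝ} {i : Fin (n + 1)}
    (hi : i ∈ s) : b i ≤ s.fold max 0 b :=
  (Finset.le_fold_max _).mpr (Or.inr ⟨i, hi, le_rfl⟩)

lemma lazyRev_nonneg (b r : Fin (n + 1) → ℝ) (hr : ∀ i, 0 ≤ r i) : 0 ≤ lazyRev b r := by
  unfold lazyRev
  split
  · exact le_trans (hr _) (le_max_left _ _)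
  · exact le_rfl

lemma eager_le_lazy_sum (b r : Fin (n + 1) → ℝ) (hb : ∀ i, 0 ≤ b i) (hr : ∀ i, 0 ≤ r i) :
    eagerRev b r ≤ lazyRev b r + lazyRev b 0 := by
  unfold eagerRev
  split
  case isTrue hS =>
    set w := lazyWinner b with hwdef
    set j := eagerWinner b r hS with hjdef
    have hjmem : j ∈ (Finset.univ.filter fun i => r i ≤ b i).filter
        fun i => ∀ k ∈ Finset.univ.filter (fun i => r i ≤ b i), b k ≤ b i :=
      Finset.min'_mem _ _
    have hjS : j ∈ Finset.univ.filter fun i => r i ≤ b i := (Finset.mem_filter.mp hjmem).1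
    have hjr : r j ≤ b j := (Finset.mem_filter.mp hjS).2
    have hjmax : ∀ k ∈ Finset.univ.filter (fun i => r i ≤ b i), b k ≤ b j :=
      (Finset.mem_filter.mp hjmem).2
    have hlazy0 : lazyRev b 0 = max 0 (secondMax b) := by
      unfold lazyRev
      simp only [Pi.zero_apply]
      rw [if_pos (hb _)]
    by_cases hw : r w ≤ b w
    · -- eager winner equals lazy winner
      have hwS : w ∈ Finset.univ.filter fun i => r i ≤ b i :=
        Finset.mem_filter.mpr ⟨Finset.mem_univ _, hw⟩
      have hjw : j = w := by
        have h1 : j ≤ w := Finset.min'_le _ _ (Finset.mem_filter.mpr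
          ⟨hwS, fun k _ => lazyWinner_spec b k⟩)
        have hbj : b j = b w :=
          le_antisymm (lazyWinner_spec b j) (hjmax w hwS)
        have h2 : w ≤ j := lazyWinner_min b (fun k => hbj ▸ lazyWinner_spec b k)
        exact le_antisymm h1 h2
      have hfold : ((Finset.univ.filter fun i => r i ≤ b i).erase j).fold max 0 b ≤
          secondMax b := by
        apply (Finset.fold_max_le _).mpr
        refine ⟨(Finset.le_fold_max _).mpr (Or.inl le_rfl), fun x hx => ?_⟩
        have hxw : x ≠ w := hjw ▸ (Finset.mem_erase.mp hx).1
        exact fold_max_mem_le (Finset.mem_erase.mpr ⟨hxw, Finset.mem_univ _⟩)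
      have hlaz : lazyRev b r = max (r w) (secondMax b) := by
        unfold lazyRev; rw [if_pos hw]
      have : max (r j) (((Finset.univ.filter fun i => r i ≤ b i).erase j).fold max 0 b)
          ≤ lazyRev b r := by
        rw [hjw] at hfold ⊢
        rw [hlaz]
        exact max_le_max le_rfl hfold
      exact this.trans (le_add_of_nonneg_right (lazyRev_nonneg b 0 fun _ => le_rfl))
    · -- lazy winner does not meet reserve
      have hlaz : lazyRev b r = 0 := by unfold lazyRev; rw [if_neg hw]
      have hjw : j ≠ w := fun h => hw (h ▸ hjr)
      have hjsec : b j ≤ secondMax b :=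
        fold_max_mem_le (Finset.mem_erase.mpr ⟨hjw, Finset.mem_univ _⟩)
      have hfold : ((Finset.univ.filter fun i => r i ≤ b i).erase j).fold max 0 b ≤
          secondMax b := by
        apply (Finset.fold_max_le _).mpr
        refine ⟨(Finset.le_fold_max _).mpr (Or.inl le_rfl), fun x hx => ?_⟩
        have hxS := Finset.mem_of_mem_erase hx
        have hxw : x ≠ w := by
          intro h; exact hw ((Finset.mem_filter.mp hxS).2.trans_eq' (by rw [h]) |>.trans_eq (by rw [h]))
        exact fold_max_mem_le (Finset.mem_erase.mpr ⟨hxw, Finset.mem_univ _⟩)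
      have hmain : max (r j) (((Finset.univ.filter fun i => r i ≤ b i).erase j).fold max 0 b)
          ≤ lazyRev b 0 := by
        rw [hlazy0]
        exact max_le ((hjr.trans hjsec).trans (le_max_right _ _))
          (hfold.trans (le_max_right _ _))
      calc max (r j) _ ≤ lazyRev b 0 := hmain
        _ ≤ lazyRev b r + lazyRev b 0 := by rw [hlaz]; simp
  case isFalse hS =>
    exact add_nonneg (lazyRev_nonneg b r hr) (lazyRev_nonneg b 0 fun _ => le_rfl)

lemma measurableSet_lazyWinner (w : Fin (n + 1)) :
    MeasurableSet {b : Fin (n + 1) → ℝ | lazyWinner b = w} := by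
  have heq : {b : Fin (n + 1) → ℝ | lazyWinner b = w} =
      (⋂ j, {b : Fin (n + 1) → ℝ | b j ≤ b w}) ∩
      ⋂ i, {b : Fin (n + 1) → ℝ | (∀ j, b j ≤ b i) → w ≤ i} := by
    ext b
    simp only [Set.mem_setOf_eq, Set.mem_inter_iff, Set.mem_iInter]
    constructor
    · rintro rfl
      exact ⟨lazyWinner_spec b, fun i hi => lazyWinner_min b hi⟩
    · rintro ⟨h1, h2⟩
      exact le_antisymm (lazyWinner_min b h1) (h2 _ (lazyWinner_spec b))
  rw [heq]
  apply MeasurableSet.inter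
  · exact MeasurableSet.iInter fun j =>
      measurableSet_le (measurable_pi_apply j) (measurable_pi_apply w)
  · refine MeasurableSet.iInter fun i => ?_
    by_cases hwi : w ≤ i
    · have : {b : Fin (n + 1) → ℝ | (∀ j, b j ≤ b i) → w ≤ i} = Set.univ := by
        ext b; simp [hwi]
      rw [this]; exact MeasurableSet.univ
    · have : {b : Fin (n + 1) → ℝ | (∀ j, b j ≤ b i) → w ≤ i} =
          (⋂ j, {b : Fin (n + 1) → ℝ | b j ≤ b i})ᶜ := by
        ext b; simp [hwi]
      rw [this]
      exact (MeasurableSet.iInter fun j =>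
        measurableSet_le (measurable_pi_apply j) (measurable_pi_apply i)).compl

lemma measurable_fold_max (s : Finset (Fin (n + 1))) :
    Measurable fun b : Fin (n + 1) → ℝ => s.fold max 0 b := by
  classical
  induction s using Finset.induction_on with
  | empty => simp only [Finset.fold_empty]; exact measurable_const
  | insert _ _ ha ih =>
    simp only [Finset.fold_insert ha]
    exact (measurable_pi_apply _).max ih

lemma measurable_lazyRev (r : Fin (n + 1) → ℝ) :
    Measurable fun b : Fin (n + 1) → ℝ => lazyRev b r := by
  have heq : (fun b : Fin (n + 1) → ℝ => lazyRev b r) = fun b =>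
      ∑ w : Fin (n + 1), if lazyWinner b = w then
        (if r w ≤ b w then max (r w) ((Finset.univ.erase w).fold max 0 b) else 0) else 0 := by
    funext b
    rw [Finset.sum_ite_eq (Finset.univ) (lazyWinner b)]
    simp only [Finset.mem_univ, if_pos]
    rfl
  rw [heq]
  apply Finset.measurable_sum
  intro w _
  apply Measurable.ite (measurableSet_lazyWinner w)
  · apply Measurable.ite (measurableSet_le measurable_const (measurable_pi_apply w))
    · exact measurable_const.max (measurable_fold_max _)
    · exact measurable_const
  · exact measurable_const

end Aux

theorem eager_le_two_opt_lazy {n : ℕ} (μ : Measure (Fin (n + 1) → ℝ))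
    [IsProbabilityMeasure μ] (hb : ∀ᵐ b ∂μ, ∀ i, 0 ≤ b i)
    (r : Fin (n + 1) → ℝ) (hr : ∀ i, 0 ≤ r i) :
    ∫⁻ b, ENNReal.ofReal (eagerRev b r) ∂μ ≤
      2 * ⨆ (r' : Fin (n + 1) → ℝ) (_ : ∀ i, 0 ≤ r' i),
        ∫⁻ b, ENNReal.ofReal (lazyRev b r') ∂μ := by
  set T := ⨆ (r' : Fin (n + 1) → ℝ) (_ : ∀ i, 0 ≤ r' i),
      ∫⁻ b, ENNReal.ofReal (lazyRev b r') ∂μ with hT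
  have step1 : ∫⁻ b, ENNReal.ofReal (eagerRev b r) ∂μ ≤
      ∫⁻ b, (ENNReal.ofReal (lazyRev b r) + ENNReal.ofReal (lazyRev b 0)) ∂μ := by
    apply lintegral_mono_ae
    filter_upwards [hb] with b hbnn
    calc ENNReal.ofReal (eagerRev b r)
        ≤ ENNReal.ofReal (lazyRev b r + lazyRev b 0) :=
          ENNReal.ofReal_le_ofReal (eager_le_lazy_sum b r hbnn hr)
      _ ≤ _ := ENNReal.ofReal_add_le
  have step2 : ∫⁻ b, (ENNReal.ofReal (lazyRev b r) + ENNReal.ofReal (lazyRev b 0)) ∂μ =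
      ∫⁻ b, ENNReal.ofReal (lazyRev b r) ∂μ + ∫⁻ b, ENNReal.ofReal (lazyRev b 0) ∂μ :=
    lintegral_add_left ((measurable_lazyRev r).ennreal_ofReal) _
  have h1 : ∫⁻ b, ENNReal.ofReal (lazyRev b r) ∂μ ≤ T :=
    le_iSup₂ (f := fun r' (_ : ∀ i, 0 ≤ r' i) => ∫⁻ b, ENNReal.ofReal (lazyRev b r') ∂μ) r hr
  have h0 : ∫⁻ b, ENNReal.ofReal (lazyRev b 0) ∂μ ≤ T :=
    le_iSup₂ (f := fun r' (_ : ∀ i, 0 ≤ r' i) => ∫⁻ b, ENNReal.ofReal (lazyRev b r') ∂μ)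
      0 (fun _ => le_rfl)
  calc ∫⁻ b, ENNReal.ofReal (eagerRev b r) ∂μ ≤ _ := step1
    _ = _ := step2
    _ ≤ T + T := add_le_add h1 h0
    _ = 2 * T := (two_mul T).symm
end

section
/- A/B testing eager reserves is harmful: let n bidders have i.i.d. bids from a regular distribution on [0, ∞) with CDF F, density f, nondecreasing virtual value φ(v) = v − (1 − F(v))/f(v), and Myerson reserve ρ ≥ 0 satisfying φ(ρ) = 0. For 0 ≤ k ≤ n, let r^k be the reserve vector that equals ρ on the first k coordinates and 0 elsewhere, and let RevE(k) = E[RevE(b, r^k)] under the product measure. Then RevE(0) ≥ RevE(1) ≥ ⋯ ≥ RevE(n−1), i.e., the expected eager revenue is nonincreasing in k for k ≤ n − 1. -/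
open MeasureTheory Finset
open scoped Classical ENNReal


section Prelim
variable {ι : Type*} [DecidableEq ι]

omit [DecidableEq ι] in
lemma fold_max_nonneg (s : Finset ι) (v : ι → ℝ) : 0 ≤ s.fold max 0 v :=
  (Finset.le_fold_max 0).2 (Or.inl le_rfl)

lemma fold_filter_ite (s : Finset ι) (p : ι → Prop) [DecidablePred p] (v : ι → ℝ) :
    (s.filter p).fold max 0 v = s.fold max 0 (fun l => if p l then v l else 0) := by
  induction s using Finset.induction_on with
  | empty => simp
  | insert _ _ h ih =>
    rename_i a s
    rw [Finset.filter_insert, Finset.fold_insert h]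
    by_cases hp : p a
    · rw [if_pos hp, Finset.fold_insert (by simp [h]), ih, if_pos hp]
    · rw [if_neg hp, ih, if_neg hp]
      exact (max_eq_right (fold_max_nonneg _ _)).symm

omit [DecidableEq ι] in
lemma measurable_fold_max_s12 {δ : Type*} [MeasurableSpace δ] (s : Finset ι) (v : ι → δ → ℝ)
    (hv : ∀ l, Measurable (v l)) : Measurable (fun b => s.fold max 0 (fun l => v l b)) := by
  classical
  induction s using Finset.induction_on with
  | empty => simpa using measurable_const
  | insert _ _ h ih =>
    rename_i a s
    simp only [Finset.fold_insert h]
    exact (hv a).max ih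

omit [DecidableEq ι] in
lemma finset_sum_lintegral_le {α : Type*} [MeasurableSpace α] (μ : Measure α)
    (s : Finset ι) (v : ι → α → ℝ≥0∞) :
    ∑ l ∈ s, ∫⁻ x, v l x ∂μ ≤ ∫⁻ x, ∑ l ∈ s, v l x ∂μ := by
  classical
  induction s using Finset.induction_on with
  | empty => simp
  | insert _ _ h ih =>
    rename_i a s
    simp only [Finset.sum_insert h]
    calc (∫⁻ x, v a x ∂μ) + ∑ l ∈ s, ∫⁻ x, v l x ∂μ
        ≤ (∫⁻ x, v a x ∂μ) + ∫⁻ x, ∑ l ∈ s, v l x ∂μ := by gcongr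
      _ ≤ _ := MeasureTheory.le_lintegral_add _ _

end Prelim

section WD
variable {α : Type*} [MeasurableSpace α] (μ : Measure α)

/-- One-sided comparison, valid for arbitrary (possibly non-measurable) density F. -/
lemma lintegral_withDensity_le_mul (F : α → ℝ≥0∞) {h : α → ℝ≥0∞}
    (hfin : ∀ x, h x ≠ ∞) :
    ∫⁻ x, h x ∂(μ.withDensity F) ≤ ∫⁻ x, h x * F x ∂μ := by
  rw [MeasureTheory.lintegral_def]
  refine iSup₂_le fun ψ hψ => ?_
  rw [SimpleFunc.lintegral]
  have key : ∀ c ∈ ψ.range, c * (μ.withDensity F) (ψ ⁻¹' {c}) =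
      ∫⁻ x, c * (ψ ⁻¹' {c}).indicator F x ∂μ := by
    intro c hc
    obtain ⟨x0, hx0⟩ := SimpleFunc.mem_range.1 hc
    have hcfin : c ≠ ∞ := by
      rw [← hx0]
      exact fun hcf => hfin x0 (top_le_iff.1 (hcf ▸ hψ x0))
    rw [MeasureTheory.lintegral_const_mul' _ _ hcfin,
      MeasureTheory.lintegral_indicator (ψ.measurableSet_preimage _),
      MeasureTheory.withDensity_apply _ (ψ.measurableSet_preimage _)]
  calc ∑ c ∈ ψ.range, c * (μ.withDensity F) (ψ ⁻¹' {c})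
      = ∑ c ∈ ψ.range, ∫⁻ x, c * (ψ ⁻¹' {c}).indicator F x ∂μ :=
        Finset.sum_congr rfl key
    _ ≤ ∫⁻ x, ∑ c ∈ ψ.range, c * (ψ ⁻¹' {c}).indicator F x ∂μ :=
        finset_sum_lintegral_le μ _ _
    _ ≤ ∫⁻ x, h x * F x ∂μ := by
        refine lintegral_mono fun x => ?_
        have : ∑ c ∈ ψ.range, c * (ψ ⁻¹' {c}).indicator F x = ψ x * F x := by
          rw [Finset.sum_eq_single (ψ x)]
          · simp [Set.indicator_of_mem, Set.mem_preimage]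
          · intro c hc hne
            rw [Set.indicator_of_notMem (by simpa using (Ne.symm hne)), mul_zero]
          · intro hmem
            exact absurd (SimpleFunc.mem_range_self ψ x) hmem
        rw [this]
        exact mul_le_mul_left (hψ x) _

/-- The other one-sided comparison: requires `h` strictly positive and finite. -/
lemma lintegral_mul_le_withDensity (F : α → ℝ≥0∞) {h : α → ℝ≥0∞} (hh : Measurable h)
    (hpos : ∀ x, h x ≠ 0) (hfin : ∀ x, h x ≠ ∞) :
    ∫⁻ x, h x * F x ∂μ ≤ ∫⁻ x, h x ∂(μ.withDensity F) := by
  conv_lhs => rw [MeasureTheory.lintegral_def]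
  refine iSup₂_le fun ψ hψ => ?_
  set F' : α → ℝ≥0∞ := fun x => ψ x / h x with hF'
  have hF'meas : Measurable F' := ψ.measurable.div hh
  have hF'le : ∀ x, F' x ≤ F x := fun x =>
    (ENNReal.div_le_iff_le_mul (Or.inl (hpos x)) (Or.inl (hfin x))).2
      (le_trans (hψ x) (mul_comm (h x) (F x) ▸ le_rfl))
  have hrecover : ∀ x, h x * F' x = ψ x := fun x =>
    ENNReal.mul_div_cancel (hpos x) (hfin x)
  calc ψ.lintegral μ = ∫⁻ x, ψ x ∂μ := (ψ.lintegral_eq_lintegral μ).symm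
    _ = ∫⁻ x, h x * F' x ∂μ := by simp_rw [hrecover]
    _ = ∫⁻ x, (F' * fun x => h x) x ∂μ := by
        refine lintegral_congr fun x => ?_
        simp [mul_comm]
    _ = ∫⁻ x, h x ∂(μ.withDensity F') :=
        (MeasureTheory.lintegral_withDensity_eq_lintegral_mul μ hF'meas hh).symm
    _ ≤ ∫⁻ x, h x ∂(μ.withDensity F) :=
        lintegral_mono' (MeasureTheory.withDensity_mono (Filter.Eventually.of_forall hF'le)) le_rfl

end WD
section OneD

variable {ν : Measure ℝ} [IsProbabilityMeasure ν]
  {f : ℝ → ℝ} {F φ : ℝ → ℝ} {ρ : ℝ}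

/-- survival function -/
noncomputable def gfn (ν : Measure ℝ) (x : ℝ) : ℝ := (ν (Set.Ioi x)).toReal

/-- x ↦ x (1 - F x) -/
noncomputable def wfn (ν : Measure ℝ) (x : ℝ) : ℝ := x * gfn ν x

lemma gfn_nonneg (x : ℝ) : 0 ≤ gfn ν x := ENNReal.toReal_nonneg

lemma gfn_le_one (x : ℝ) : gfn ν x ≤ 1 := by
  have := measure_mono (Set.subset_univ (Set.Ioi x)) (μ := ν)
  rw [measure_univ] at this
  simpa [gfn] using ENNReal.toReal_mono (by simp) this

lemma gfn_anti : Antitone (gfn ν) := fun a b hab => by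
  apply ENNReal.toReal_mono (measure_ne_top ν _)
  exact measure_mono (Set.Ioi_subset_Ioi hab)

lemma measurable_gfn : Measurable (gfn ν) := gfn_anti.measurable

lemma ofReal_gfn (x : ℝ) : ν (Set.Ioi x) = ENNReal.ofReal (gfn ν x) := by
  rw [gfn, ENNReal.ofReal_toReal (measure_ne_top ν _)]

lemma wfn_nonneg {x : ℝ} (hx : 0 ≤ x) : 0 ≤ wfn ν x := mul_nonneg hx (gfn_nonneg x)

section withnu
variable (hν : ν = volume.withDensity fun x => ENNReal.ofReal (f x))

include hν

lemma nu_singleton (c : ℝ) : ν {c} = 0 := by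
  rw [hν, withDensity_apply _ (measurableSet_singleton c)]
  exact setLIntegral_measure_zero _ _ (Real.volume_singleton)

lemma nu_noAtoms : NoAtoms ν := ⟨fun c => nu_singleton hν c⟩

lemma nu_Ioc_eq (a b : ℝ) (hab : a ≤ b) :
    ν (Set.Ioc a b) = ENNReal.ofReal (gfn ν a - gfn ν b) := by
  have hsplit : Set.Ioi a = Set.Ioc a b ∪ Set.Ioi b := (Set.Ioc_union_Ioi_eq_Ioi hab).symm
  have hdisj : Disjoint (Set.Ioc a b) (Set.Ioi b) := by
    rw [Set.disjoint_left]; intro x hx hx'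
    exact absurd hx.2 (not_le.2 hx')
  have hm : ν (Set.Ioi a) = ν (Set.Ioc a b) + ν (Set.Ioi b) := by
    rw [hsplit, measure_union hdisj measurableSet_Ioi]
  have h1 : ν (Set.Ioc a b) = ν (Set.Ioi a) - ν (Set.Ioi b) := by
    rw [hm]; exact (ENNReal.add_sub_cancel_right (measure_ne_top ν _)).symm
  rw [h1, ofReal_gfn, ofReal_gfn, ← ENNReal.ofReal_sub _ (gfn_nonneg b)]

lemma nu_Ioo_eq (a b : ℝ) (hab : a ≤ b) :
    ν (Set.Ioo a b) = ENNReal.ofReal (gfn ν a - gfn ν b) := by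
  have := nu_noAtoms hν
  rw [← nu_Ioc_eq hν a b hab]
  exact measure_congr (Ioo_ae_eq_Ioc' (nu_singleton hν b))

lemma nu_Iio0 : ν (Set.Iio 0) = 0 → True := fun _ => trivial

end withnu

/-- generic layer-cake vs an auxiliary measure m' -/
lemma layercake (m' : Measure ℝ) [SigmaFinite m'] (a b : ℝ) :
    ∫⁻ s in Set.Ioc a b, ν (Set.Ioi s) ∂m' = ∫⁻ x, m' (Set.Iio x ∩ Set.Ioc a b) ∂ν := by
  have h1 : ∀ s : ℝ, ν (Set.Ioi s) = ∫⁻ x, (Set.Ioi s).indicator 1 x ∂ν := fun s =>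
    (lintegral_indicator_one measurableSet_Ioi).symm
  calc ∫⁻ s in Set.Ioc a b, ν (Set.Ioi s) ∂m'
      = ∫⁻ s in Set.Ioc a b, ∫⁻ x, (Set.Ioi s).indicator 1 x ∂ν ∂m' := by
        exact lintegral_congr fun s => h1 s
    _ = ∫⁻ x, ∫⁻ s in Set.Ioc a b, (Set.Ioi s).indicator 1 x ∂m' ∂ν := by
        apply lintegral_lintegral_swap
        have : (Function.uncurry fun s x => (Set.Ioi s).indicator (1 : ℝ → ℝ≥0∞) x) =
            fun p : ℝ × ℝ => {q : ℝ × ℝ | q.1 < q.2}.indicator 1 p := by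
          ext p
          by_cases h : p.1 < p.2 <;>
            simp [Function.uncurry, Set.indicator, h, Set.mem_Ioi, Set.mem_setOf_eq]
        rw [this]
        exact ((measurable_const (a := (1:ℝ≥0∞))).indicator
          (measurableSet_lt measurable_fst measurable_snd)).aemeasurable
    _ = ∫⁻ x, m' (Set.Iio x ∩ Set.Ioc a b) ∂ν := by
        refine lintegral_congr fun x => ?_
        have : ∀ s : ℝ, (Set.Ioi s).indicator (1 : ℝ → ℝ≥0∞) x = (Set.Iio x).indicator 1 s := by
          intro s
          by_cases h : s < x <;> simp [Set.indicator, h, Set.mem_Ioi, Set.mem_Iio]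
        rw [lintegral_congr this, lintegral_indicator_one measurableSet_Iio,
          Measure.restrict_apply measurableSet_Iio]

end OneD

section Main1D
set_option linter.unusedSectionVars false

variable {ν : Measure ℝ} [IsProbabilityMeasure ν]
  {f F φ : ℝ → ℝ} {ρ : ℝ}

lemma setlint_ofReal_ne_top {μ : Measure ℝ} [IsFiniteMeasure μ] {s : Set ℝ}
    (hs : MeasurableSet s) {v : ℝ → ℝ} {C : ℝ}
    (hb : ∀ x ∈ s, v x ≤ C) : ∫⁻ x in s, ENNReal.ofReal (v x) ∂μ ≠ ⊤ := by
  have h1 : ∫⁻ x in s, ENNReal.ofReal (v x) ∂μ ≤ ENNReal.ofReal C * μ s := by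
    rw [← setLIntegral_const s (ENNReal.ofReal C)]
    refine lintegral_mono_ae ?_
    filter_upwards [ae_restrict_mem hs] with x hx
    exact ENNReal.ofReal_le_ofReal (hb x hx)
  exact ne_top_of_le_ne_top (by finiteness) h1

/-- layer cake specialized to Lebesgue measure. -/
lemma LC1 (a b : ℝ) (hab : a ≤ b) :
    ∫⁻ x in Set.Ioc a b, ENNReal.ofReal (gfn ν x) ∂volume
      = ∫⁻ x in Set.Ioc a b, ENNReal.ofReal (x - a) ∂ν
        + ENNReal.ofReal (b - a) * ν (Set.Ioi b) := by
  have h0 : ∫⁻ x in Set.Ioc a b, ENNReal.ofReal (gfn ν x) ∂volume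
      = ∫⁻ s in Set.Ioc a b, ν (Set.Ioi s) ∂volume :=
    lintegral_congr fun s => by rw [ofReal_gfn]
  rw [h0, layercake (ν := ν) volume a b]
  have hvol : ∀ x : ℝ, volume (Set.Iio x ∩ Set.Ioc a b) = ENNReal.ofReal (min b x - a) := by
    intro x
    rcases le_or_gt x a with hxa | hax
    · have : Set.Iio x ∩ Set.Ioc a b = ∅ := by
        ext s; simp only [Set.mem_inter_iff, Set.mem_Iio, Set.mem_Ioc, Set.mem_empty_iff_false,
          iff_false, not_and, and_imp]
        intro hsx has; linarith
      rw [this, measure_empty, eq_comm, ENNReal.ofReal_eq_zero]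
      have : min b x ≤ x := min_le_right _ _
      linarith
    · rcases le_or_gt x b with hxb | hbx
      · have : Set.Iio x ∩ Set.Ioc a b = Set.Ioo a x := by
          ext s; simp only [Set.mem_inter_iff, Set.mem_Iio, Set.mem_Ioc, Set.mem_Ioo]
          constructor
          · rintro ⟨h1, h2, h3⟩; exact ⟨h2, h1⟩
          · rintro ⟨h1, h2⟩; exact ⟨h2, h1, by linarith⟩
        rw [this, Real.volume_Ioo, min_eq_right hxb]
      · have : Set.Iio x ∩ Set.Ioc a b = Set.Ioc a b := by
          refine Set.inter_eq_right.2 fun s hs => ?_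
          simp only [Set.mem_Iio]; exact lt_of_le_of_lt hs.2 hbx
        rw [this, Real.volume_Ioc, min_eq_left hbx.le]
  rw [lintegral_congr hvol]
  -- split at Iic b
  rw [← lintegral_add_compl (fun x => ENNReal.ofReal (min b x - a)) (measurableSet_Iic (a := b))]
  have hIic : ∫⁻ x in Set.Iic b, ENNReal.ofReal (min b x - a) ∂ν
      = ∫⁻ x in Set.Ioc a b, ENNReal.ofReal (x - a) ∂ν := by
    have h1 : ∫⁻ x in Set.Iic b, ENNReal.ofReal (min b x - a) ∂ν
        = ∫⁻ x in Set.Iic b, ENNReal.ofReal (x - a) ∂ν := by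
      refine setLIntegral_congr_fun measurableSet_Iic ?_
      exact fun x hx => by rw [min_eq_right hx]
    rw [h1, ← Set.Iic_union_Ioc_eq_Iic hab,
      lintegral_union measurableSet_Ioc (Set.Iic_disjoint_Ioc le_rfl)]
    have h2 : ∫⁻ x in Set.Iic a, ENNReal.ofReal (x - a) ∂ν = 0 := by
      rw [← lintegral_zero (μ := ν.restrict (Set.Iic a))]
      refine setLIntegral_congr_fun measurableSet_Iic ?_
      exact fun x hx => by
        rw [ENNReal.ofReal_eq_zero]; exact sub_nonpos.2 hx
    rw [h2, zero_add]
  have hIoi : ∫⁻ x in (Set.Iic b)ᶜ, ENNReal.ofReal (min b x - a) ∂ν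
      = ENNReal.ofReal (b - a) * ν (Set.Ioi b) := by
    rw [Set.compl_Iic]
    have h1 : ∫⁻ x in Set.Ioi b, ENNReal.ofReal (min b x - a) ∂ν
        = ∫⁻ _ in Set.Ioi b, ENNReal.ofReal (b - a) ∂ν := by
      refine setLIntegral_congr_fun measurableSet_Ioi ?_
      exact fun x hx => by
        rw [min_eq_left (le_of_lt hx)]
    rw [h1, setLIntegral_const]
  rw [hIic, hIoi]

/-- layer cake specialized to ν itself. -/
lemma LC2 (hν : ν = volume.withDensity fun x => ENNReal.ofReal (f x)) (a b : ℝ) (hab : a ≤ b) :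
    ∫⁻ x in Set.Ioc a b, ENNReal.ofReal (gfn ν x) ∂ν
      = ∫⁻ x in Set.Ioc a b, ENNReal.ofReal (gfn ν a - gfn ν x) ∂ν
        + ENNReal.ofReal (gfn ν a - gfn ν b) * ν (Set.Ioi b) := by
  have h0 : ∫⁻ x in Set.Ioc a b, ENNReal.ofReal (gfn ν x) ∂ν
      = ∫⁻ s in Set.Ioc a b, ν (Set.Ioi s) ∂ν :=
    lintegral_congr fun s => by rw [ofReal_gfn]
  rw [h0, layercake (ν := ν) ν a b]
  have hval : ∀ x : ℝ, ν (Set.Iio x ∩ Set.Ioc a b)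
      = ENNReal.ofReal (gfn ν a - gfn ν (min b x)) := by
    intro x
    rcases le_or_gt x a with hxa | hax
    · have : Set.Iio x ∩ Set.Ioc a b = ∅ := by
        ext s; simp only [Set.mem_inter_iff, Set.mem_Iio, Set.mem_Ioc, Set.mem_empty_iff_false,
          iff_false, not_and, and_imp]
        intro hsx has; linarith
      rw [this, measure_empty, eq_comm, ENNReal.ofReal_eq_zero, sub_nonpos]
      exact gfn_anti (le_trans (min_le_right _ _) hxa)
    · rcases le_or_gt x b with hxb | hbx
      · have hset : Set.Iio x ∩ Set.Ioc a b = Set.Ioo a x := by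
          ext s; simp only [Set.mem_inter_iff, Set.mem_Iio, Set.mem_Ioc, Set.mem_Ioo]
          constructor
          · rintro ⟨h1, h2, h3⟩; exact ⟨h2, h1⟩
          · rintro ⟨h1, h2⟩; exact ⟨h2, h1, by linarith⟩
        rw [hset, nu_Ioo_eq hν a x hax.le, min_eq_right hxb]
      · have hset : Set.Iio x ∩ Set.Ioc a b = Set.Ioc a b := by
          refine Set.inter_eq_right.2 fun s hs => ?_
          simp only [Set.mem_Iio]; exact lt_of_le_of_lt hs.2 hbx
        rw [hset, nu_Ioc_eq hν a b hab, min_eq_left hbx.le]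
  rw [lintegral_congr hval]
  rw [← lintegral_add_compl (fun x => ENNReal.ofReal (gfn ν a - gfn ν (min b x)))
    (measurableSet_Iic (a := b))]
  have hIic : ∫⁻ x in Set.Iic b, ENNReal.ofReal (gfn ν a - gfn ν (min b x)) ∂ν
      = ∫⁻ x in Set.Ioc a b, ENNReal.ofReal (gfn ν a - gfn ν x) ∂ν := by
    have h1 : ∫⁻ x in Set.Iic b, ENNReal.ofReal (gfn ν a - gfn ν (min b x)) ∂ν
        = ∫⁻ x in Set.Iic b, ENNReal.ofReal (gfn ν a - gfn ν x) ∂ν := by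
      refine setLIntegral_congr_fun measurableSet_Iic ?_
      exact fun x hx => by rw [min_eq_right hx]
    rw [h1, ← Set.Iic_union_Ioc_eq_Iic hab,
      lintegral_union measurableSet_Ioc (Set.Iic_disjoint_Ioc le_rfl)]
    have h2 : ∫⁻ x in Set.Iic a, ENNReal.ofReal (gfn ν a - gfn ν x) ∂ν = 0 := by
      rw [← lintegral_zero (μ := ν.restrict (Set.Iic a))]
      refine setLIntegral_congr_fun measurableSet_Iic ?_
      exact fun x hx => by
        rw [ENNReal.ofReal_eq_zero, sub_nonpos]
        exact gfn_anti hx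
    rw [h2, zero_add]
  have hIoi : ∫⁻ x in (Set.Iic b)ᶜ, ENNReal.ofReal (gfn ν a - gfn ν (min b x)) ∂ν
      = ENNReal.ofReal (gfn ν a - gfn ν b) * ν (Set.Ioi b) := by
    rw [Set.compl_Iic]
    have h1 : ∫⁻ x in Set.Ioi b, ENNReal.ofReal (gfn ν a - gfn ν (min b x)) ∂ν
        = ∫⁻ _ in Set.Ioi b, ENNReal.ofReal (gfn ν a - gfn ν b) ∂ν := by
      refine setLIntegral_congr_fun measurableSet_Ioi ?_
      exact fun x hx => by
        rw [min_eq_left (le_of_lt hx)]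
    rw [h1, setLIntegral_const]
  rw [hIic, hIoi]

end Main1D

section Main1D2
set_option linter.unusedSectionVars false

variable {ν : Measure ℝ} [IsProbabilityMeasure ν]
  {f F φ : ℝ → ℝ} {ρ : ℝ}
  (hf0 : ∀ x, 0 ≤ f x)
  (hν : ν = volume.withDensity fun x => ENNReal.ofReal (f x))
  (hF : ∀ x, F x = (ν (Set.Iic x)).toReal)
  (hφ : ∀ x, φ x = x - (1 - F x) / f x)
  (hreg : MonotoneOn φ (Set.Ici 0))
  (hρpos : 0 < ρ) (hφρ : φ ρ = 0)

include hF in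
lemma one_sub_F (x : ℝ) : 1 - F x = gfn ν x := by
  have hc : ν (Set.Iic x) + ν (Set.Ioi x) = 1 := by
    rw [← Set.compl_Iic, measure_add_measure_compl measurableSet_Iic, measure_univ]
  have := congrArg ENNReal.toReal hc
  rw [ENNReal.toReal_add (measure_ne_top ν _) (measure_ne_top ν _), ENNReal.toReal_one] at this
  rw [hF]
  unfold gfn
  linarith

include hf0 hF hφ hreg hρpos hφρ in
lemma fpos : ∀ x, 0 < x → x ≤ ρ → 0 < f x := by
  intro x hx hxρ
  rcases (hf0 x).lt_or_eq with h | h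
  · exact h
  · exfalso
    have hphix : φ x = x := by rw [hφ, ← h, div_zero, sub_zero]
    have : φ x ≤ φ ρ := hreg (Set.mem_Ici.2 hx.le) (Set.mem_Ici.2 hρpos.le) hxρ
    rw [hphix, hφρ] at this
    linarith

include hreg hρpos hφρ in
lemma phi_nonpos : ∀ x, 0 ≤ x → x ≤ ρ → φ x ≤ 0 := by
  intro x hx hxρ
  have : φ x ≤ φ ρ := hreg (Set.mem_Ici.2 hx) (Set.mem_Ici.2 hρpos.le) hxρ
  rw [hφρ] at this; exact this

include hf0 hν hF hφ hreg hρpos hφρ in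
lemma ineq_i {m t : ℝ} (hm : 0 ≤ m) (hmt : m < t) (htρ : t ≤ ρ) :
    -(φ t) * (gfn ν m - gfn ν t) ≤ wfn ν t - wfn ν m := by
  have hφt : φ t ≤ 0 := phi_nonpos hreg hρpos hφρ t (le_trans hm hmt.le) htρ
  set S := ∫⁻ x in Set.Ioc m t, ENNReal.ofReal (x - m) ∂ν with hS
  have hSne : S ≠ ⊤ := setlint_ofReal_ne_top (C := t - m) measurableSet_Ioc
    (fun x hx => by have := hx.2; linarith)
  -- step1
  have step1 : ∫⁻ x in Set.Ioc m t, ENNReal.ofReal (x - φ t) ∂ν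
      = S + ENNReal.ofReal (m - φ t) * ν (Set.Ioc m t) := by
    rw [← setLIntegral_const (Set.Ioc m t) (ENNReal.ofReal (m - φ t)), hS,
      ← lintegral_add_right' _ (aemeasurable_const)]
    refine setLIntegral_congr_fun measurableSet_Ioc
      (fun x hx => ?_)
    have h1 : (0:ℝ) ≤ x - m := le_of_lt (sub_pos.2 hx.1)
    have h2 : (0:ℝ) ≤ m - φ t := by linarith
    rw [← ENNReal.ofReal_add h1 h2]
    congr 1
    ring
  -- step2
  have step2 : ∫⁻ x in Set.Ioc m t, ENNReal.ofReal (x - φ t) ∂ν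
      ≤ ∫⁻ x in Set.Ioc m t, ENNReal.ofReal (gfn ν x) ∂volume := by
    have hrw : ν.restrict (Set.Ioc m t)
        = (volume.restrict (Set.Ioc m t)).withDensity fun x => ENNReal.ofReal (f x) := by
      rw [hν, restrict_withDensity measurableSet_Ioc]
    rw [hrw]
    calc ∫⁻ x, ENNReal.ofReal (x - φ t)
          ∂((volume.restrict (Set.Ioc m t)).withDensity fun x => ENNReal.ofReal (f x))
        ≤ ∫⁻ x in Set.Ioc m t, ENNReal.ofReal (x - φ t) * ENNReal.ofReal (f x) ∂volume :=
          lintegral_withDensity_le_mul _ _ (fun x => ENNReal.ofReal_ne_top)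
      _ ≤ ∫⁻ x in Set.Ioc m t, ENNReal.ofReal (gfn ν x) ∂volume := by
          refine lintegral_mono_ae ?_
          filter_upwards [ae_restrict_mem measurableSet_Ioc] with x hx
          have hx0 : 0 < x := lt_of_le_of_lt hm hx.1
          have hfx : 0 < f x := fpos hf0 hF hφ hreg hρpos hφρ x hx0 (le_trans hx.2 htρ)
          have hφx : φ x ≤ φ t := hreg (Set.mem_Ici.2 hx0.le) (Set.mem_Ici.2 (by linarith))
            hx.2
          have hgf : φ x = x - gfn ν x / f x := by
            rw [hφ, one_sub_F hF]
          have hkey : (x - φ t) * f x ≤ gfn ν x := by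
            have h1 : x - φ t ≤ gfn ν x / f x := by
              rw [hgf] at hφx; linarith
            calc (x - φ t) * f x ≤ (gfn ν x / f x) * f x :=
                  mul_le_mul_of_nonneg_right h1 hfx.le
              _ = gfn ν x := div_mul_cancel₀ _ hfx.ne'
          rw [← ENNReal.ofReal_mul (by linarith [hx.1])]
          exact ENNReal.ofReal_le_ofReal hkey
  -- combine with LC1
  have step3 := LC1 (ν := ν) m t hmt.le
  have hmain : ENNReal.ofReal (m - φ t) * ν (Set.Ioc m t)
      ≤ ENNReal.ofReal (t - m) * ν (Set.Ioi t) := by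
    have h4 : S + ENNReal.ofReal (m - φ t) * ν (Set.Ioc m t)
        ≤ S + ENNReal.ofReal (t - m) * ν (Set.Ioi t) := by
      rw [← step1, ← step3]; exact step2
    exact (ENNReal.add_le_add_iff_left hSne).1 h4
  rw [nu_Ioc_eq hν m t hmt.le, ofReal_gfn,
    ← ENNReal.ofReal_mul (by linarith), ← ENNReal.ofReal_mul (by linarith)] at hmain
  have hreal : (m - φ t) * (gfn ν m - gfn ν t) ≤ (t - m) * gfn ν t :=
    le_trans (le_of_eq rfl) (by
      have := (ENNReal.ofReal_le_ofReal_iff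
        (mul_nonneg (by linarith) (gfn_nonneg t))).1 hmain
      exact this)
  have hg : gfn ν t ≤ gfn ν m := gfn_anti hmt.le
  unfold wfn
  nlinarith [hreal]

include hf0 hν hF hφ hreg hρpos hφρ in
lemma ineq_ii {t : ℝ} (ht : 0 ≤ t) (htρ : t < ρ) :
    φ t * (gfn ν t - gfn ν ρ) ≤ wfn ν t - wfn ν ρ := by
  have hφt : φ t ≤ 0 := phi_nonpos hreg hρpos hφρ t ht htρ.le
  set S := ∫⁻ x in Set.Ioc t ρ, ENNReal.ofReal (x - t) ∂ν with hS
  have hSne : S ≠ ⊤ := setlint_ofReal_ne_top (C := ρ - t) measurableSet_Ioc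
    (fun x hx => by have := hx.2; linarith)
  have step1 : ∫⁻ x in Set.Ioc t ρ, ENNReal.ofReal (x - φ t) ∂ν
      = S + ENNReal.ofReal (t - φ t) * ν (Set.Ioc t ρ) := by
    rw [← setLIntegral_const (Set.Ioc t ρ) (ENNReal.ofReal (t - φ t)), hS,
      ← lintegral_add_right' _ (aemeasurable_const)]
    refine setLIntegral_congr_fun measurableSet_Ioc
      (fun x hx => ?_)
    have h1 : (0:ℝ) ≤ x - t := le_of_lt (sub_pos.2 hx.1)
    have h2 : (0:ℝ) ≤ t - φ t := by linarith
    rw [← ENNReal.ofReal_add h1 h2]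
    congr 1
    ring
  -- step2 (reverse direction, using positivity)
  have step2 : ∫⁻ x in Set.Ioc t ρ, ENNReal.ofReal (gfn ν x) ∂volume
      ≤ ∫⁻ x in Set.Ioc t ρ, ENNReal.ofReal (x - φ t) ∂ν := by
    have hrw : ν.restrict (Set.Ioc t ρ)
        = (volume.restrict (Set.Ioc t ρ)).withDensity fun x => ENNReal.ofReal (f x) := by
      rw [hν, restrict_withDensity measurableSet_Ioc]
    set h : ℝ → ℝ≥0∞ := fun x =>
      ENNReal.ofReal (x - φ t) + (Set.Ioc t ρ)ᶜ.indicator (fun _ => 1) x with hh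
    have hmeas : Measurable h := by
      rw [hh]; apply Measurable.fun_add
      · exact ENNReal.measurable_ofReal.comp (measurable_id.sub measurable_const)
      · exact measurable_const.indicator measurableSet_Ioc.compl
    have hpos : ∀ x, h x ≠ 0 := by
      intro x
      by_cases hx : x ∈ Set.Ioc t ρ
      · have : 0 < x - φ t := by
          have := hx.1; linarith
        simp only [hh, Set.indicator_of_notMem (Set.notMem_compl_iff.2 hx)]
        simpa [ENNReal.ofReal_eq_zero] using by linarith
      · simp only [hh, Set.indicator_of_mem (Set.mem_compl hx)]
        exact fun hcon => by simpa using (add_eq_zero.1 hcon).2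
    have hfin : ∀ x, h x ≠ ⊤ := by
      intro x
      refine ENNReal.add_ne_top.2 ⟨ENNReal.ofReal_ne_top, ?_⟩
      by_cases hx : x ∈ (Set.Ioc t ρ)ᶜ <;> simp [Set.indicator, hx]
    calc ∫⁻ x in Set.Ioc t ρ, ENNReal.ofReal (gfn ν x) ∂volume
        ≤ ∫⁻ x, h x * ENNReal.ofReal (f x) ∂(volume.restrict (Set.Ioc t ρ)) := by
          refine lintegral_mono_ae ?_
          filter_upwards [ae_restrict_mem measurableSet_Ioc] with x hx
          have hx0 : 0 < x := lt_of_le_of_lt ht hx.1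
          have hfx : 0 < f x := fpos hf0 hF hφ hreg hρpos hφρ x hx0 hx.2
          have hφx : φ t ≤ φ x := hreg (Set.mem_Ici.2 ht) (Set.mem_Ici.2 hx0.le) hx.1.le
          have hgf : φ x = x - gfn ν x / f x := by rw [hφ, one_sub_F hF]
          have hkey : gfn ν x ≤ (x - φ t) * f x := by
            have h1 : gfn ν x / f x ≤ x - φ t := by rw [hgf] at hφx; linarith
            calc gfn ν x = (gfn ν x / f x) * f x := (div_mul_cancel₀ _ hfx.ne').symm
              _ ≤ (x - φ t) * f x := mul_le_mul_of_nonneg_right h1 hfx.le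
          have hhx : h x = ENNReal.ofReal (x - φ t) := by
            simp only [hh, Set.indicator_of_notMem (Set.notMem_compl_iff.2 hx), add_zero]
          rw [hhx, ← ENNReal.ofReal_mul (by have := hx.1; linarith)]
          exact ENNReal.ofReal_le_ofReal hkey
      _ ≤ ∫⁻ x, h x ∂((volume.restrict (Set.Ioc t ρ)).withDensity fun x => ENNReal.ofReal (f x)) :=
          lintegral_mul_le_withDensity _ _ hmeas hpos hfin
      _ = ∫⁻ x, h x ∂(ν.restrict (Set.Ioc t ρ)) := by rw [hrw]
      _ = ∫⁻ x in Set.Ioc t ρ, ENNReal.ofReal (x - φ t) ∂ν := by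
          refine lintegral_congr_ae ?_
          filter_upwards [ae_restrict_mem measurableSet_Ioc] with x hx
          simp only [hh, Set.indicator_of_notMem (Set.notMem_compl_iff.2 hx), add_zero]
  have step3 := LC1 (ν := ν) t ρ htρ.le
  have hmain : ENNReal.ofReal (ρ - t) * ν (Set.Ioi ρ)
      ≤ ENNReal.ofReal (t - φ t) * ν (Set.Ioc t ρ) := by
    have h4 : S + ENNReal.ofReal (ρ - t) * ν (Set.Ioi ρ)
        ≤ S + ENNReal.ofReal (t - φ t) * ν (Set.Ioc t ρ) := by
      rw [← step1, ← step3]; exact step2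
    exact (ENNReal.add_le_add_iff_left hSne).1 h4
  rw [nu_Ioc_eq hν t ρ htρ.le, ofReal_gfn,
    ← ENNReal.ofReal_mul (by linarith), ← ENNReal.ofReal_mul (by linarith)] at hmain
  have hg : gfn ν ρ ≤ gfn ν t := gfn_anti htρ.le
  have hreal : (ρ - t) * gfn ν ρ ≤ (t - φ t) * (gfn ν t - gfn ν ρ) :=
    (ENNReal.ofReal_le_ofReal_iff (mul_nonneg (by linarith) (by linarith))).1 hmain
  unfold wfn
  nlinarith [hreal]

include hf0 hν hF hφ hreg hρpos hφρ in
lemma w_mono {a b : ℝ} (ha : 0 ≤ a) (hab : a ≤ b) (hbρ : b ≤ ρ) : wfn ν a ≤ wfn ν b := by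
  rcases eq_or_lt_of_le hab with h | h
  · rw [h]
  · have h1 := ineq_i hf0 hν hF hφ hreg hρpos hφρ ha h hbρ
    have hφb : φ b ≤ 0 := phi_nonpos hreg hρpos hφρ b (le_trans ha hab) hbρ
    have hg : gfn ν b ≤ gfn ν a := gfn_anti hab
    nlinarith [h1]

include hf0 hν hF hφ hreg hρpos hφρ in
lemma chord {m t : ℝ} (hm : 0 ≤ m) (hmt : m < t) (htρ : t < ρ) :
    (gfn ν t - gfn ν ρ) * wfn ν m + (gfn ν m - gfn ν t) * wfn ν ρ
      ≤ (gfn ν m - gfn ν ρ) * wfn ν t := by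
  have h1 := ineq_i hf0 hν hF hφ hreg hρpos hφρ hm hmt htρ.le
  have h2 := ineq_ii hf0 hν hF hφ hreg hρpos hφρ (le_trans hm hmt.le) htρ
  have hA : 0 ≤ gfn ν t - gfn ν ρ := by linarith [gfn_anti (ν := ν) htρ.le]
  have hB : 0 ≤ gfn ν m - gfn ν t := by linarith [gfn_anti (ν := ν) hmt.le]
  nlinarith [mul_le_mul_of_nonneg_right h1 hA, mul_le_mul_of_nonneg_right h2 hB]

end Main1D2

section Key1D
set_option linter.unusedSectionVars false

variable {ν : Measure ℝ} [IsProbabilityMeasure ν]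
  {f F φ : ℝ → ℝ} {ρ : ℝ}
  (hf0 : ∀ x, 0 ≤ f x)
  (hν : ν = volume.withDensity fun x => ENNReal.ofReal (f x))
  (hF : ∀ x, F x = (ν (Set.Iic x)).toReal)
  (hφ : ∀ x, φ x = x - (1 - F x) / f x)
  (hreg : MonotoneOn φ (Set.Ici 0))
  (hρpos : 0 < ρ) (hφρ : φ ρ = 0)

lemma measurable_wfn : Measurable (wfn ν) := measurable_id.mul measurable_gfn

include hf0 hν hF hφ hreg hρpos hφρ in
lemma key_oned (m : ℝ) (hm : 0 ≤ m) :
    ∫⁻ t in Set.Ioo m ρ, (ENNReal.ofReal (wfn ν ρ) - ENNReal.ofReal (wfn ν t)) ∂ν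
      ≤ ∫⁻ t in Set.Ioo m ρ, (ENNReal.ofReal (wfn ν t) - ENNReal.ofReal (wfn ν m)) ∂ν := by
  rcases le_or_gt ρ m with hρm | hmρ
  · rw [Set.Ioo_eq_empty (not_lt.2 hρm), Measure.restrict_empty]
    simp
  set q : ℝ := gfn ν m - gfn ν ρ with hqdef
  have hq0 : 0 ≤ q := sub_nonneg.2 (gfn_anti hmρ.le)
  have hνIoo : ν (Set.Ioo m ρ) = ENNReal.ofReal q := nu_Ioo_eq hν m ρ hmρ.le
  have hwm0 : 0 ≤ wfn ν m := wfn_nonneg hm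
  have hwρ0 : 0 ≤ wfn ν ρ := wfn_nonneg hρpos.le
  have hwmono : ∀ t ∈ Set.Ioo m ρ, wfn ν m ≤ wfn ν t ∧ wfn ν t ≤ wfn ν ρ := by
    intro t ht
    exact ⟨w_mono hf0 hν hF hφ hreg hρpos hφρ hm ht.1.le ht.2.le,
      w_mono hf0 hν hF hφ hreg hρpos hφρ (le_trans hm ht.1.le) ht.2.le le_rfl⟩
  -- the three basic integrals
  set I := ∫⁻ t in Set.Ioo m ρ, ENNReal.ofReal (wfn ν t) ∂ν with hIdef
  set E := ∫⁻ t in Set.Ioo m ρ, ENNReal.ofReal (gfn ν t) ∂ν with hEdef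
  have hIne : I ≠ ⊤ := setlint_ofReal_ne_top (C := ρ) measurableSet_Ioo
    (fun t ht => le_trans (hwmono t ht).2 (by
      unfold wfn; nlinarith [gfn_le_one (ν := ν) ρ, gfn_nonneg (ν := ν) ρ, hρpos]))
  have hEne : E ≠ ⊤ := setlint_ofReal_ne_top (C := 1) measurableSet_Ioo
    (fun t _ => gfn_le_one t)
  -- rewrite the two integrands as ofReal of differences
  have hL : ∫⁻ t in Set.Ioo m ρ, (ENNReal.ofReal (wfn ν ρ) - ENNReal.ofReal (wfn ν t)) ∂ν
      = ∫⁻ t in Set.Ioo m ρ, ENNReal.ofReal (wfn ν ρ - wfn ν t) ∂ν := by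
    refine setLIntegral_congr_fun measurableSet_Ioo (fun t ht => ?_)
    rw [ENNReal.ofReal_sub _ (by
      have := (hwmono t ht).1; linarith)]
  have hR : ∫⁻ t in Set.Ioo m ρ, (ENNReal.ofReal (wfn ν t) - ENNReal.ofReal (wfn ν m)) ∂ν
      = ∫⁻ t in Set.Ioo m ρ, ENNReal.ofReal (wfn ν t - wfn ν m) ∂ν := by
    refine setLIntegral_congr_fun measurableSet_Ioo (fun t ht => ?_)
    rw [ENNReal.ofReal_sub _ hwm0]
  rw [hL, hR]
  -- add J to both sides
  have hJmeas : Measurable fun t : ℝ => ENNReal.ofReal (wfn ν t + wfn ν m) :=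
    ENNReal.measurable_ofReal.comp (measurable_wfn.add measurable_const)
  have hJne : (∫⁻ t in Set.Ioo m ρ, ENNReal.ofReal (wfn ν t + wfn ν m) ∂ν) ≠ ⊤ :=
    setlint_ofReal_ne_top (C := wfn ν ρ + wfn ν m) measurableSet_Ioo
      (fun t ht => by linarith [(hwmono t ht).2])
  rw [← ENNReal.add_le_add_iff_right hJne,
    ← lintegral_add_right' _ hJmeas.aemeasurable, ← lintegral_add_right' _ hJmeas.aemeasurable]
  have hLsum : ∫⁻ t in Set.Ioo m ρ,
      (ENNReal.ofReal (wfn ν ρ - wfn ν t) + ENNReal.ofReal (wfn ν t + wfn ν m)) ∂ν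
      = ENNReal.ofReal (wfn ν ρ + wfn ν m) * ν (Set.Ioo m ρ) := by
    rw [← setLIntegral_const (Set.Ioo m ρ) (ENNReal.ofReal (wfn ν ρ + wfn ν m))]
    refine setLIntegral_congr_fun measurableSet_Ioo (fun t ht => ?_)
    rw [← ENNReal.ofReal_add (by linarith [(hwmono t ht).2]) (by linarith [(hwmono t ht).1])]
    congr 1; ring
  have hRsum : ∫⁻ t in Set.Ioo m ρ,
      (ENNReal.ofReal (wfn ν t - wfn ν m) + ENNReal.ofReal (wfn ν t + wfn ν m)) ∂ν
      = ∫⁻ t in Set.Ioo m ρ, ENNReal.ofReal (2 * wfn ν t) ∂ν := by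
    refine setLIntegral_congr_fun measurableSet_Ioo (fun t ht => ?_)
    rw [← ENNReal.ofReal_add (by linarith [(hwmono t ht).1]) (by linarith [(hwmono t ht).1])]
    congr 1; ring
  rw [hLsum, hRsum]
  have hRfin : ∫⁻ t in Set.Ioo m ρ, ENNReal.ofReal (2 * wfn ν t) ∂ν = 2 * I := by
    have : ∀ t : ℝ, ENNReal.ofReal (2 * wfn ν t) = 2 * ENNReal.ofReal (wfn ν t) := by
      intro t
      rw [ENNReal.ofReal_mul (by norm_num)]
      norm_num
    rw [lintegral_congr this, lintegral_const_mul' 2 _ (by norm_num), hIdef]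
  rw [hRfin, hνIoo]
  -- now the chord argument
  set I1 := ∫⁻ t in Set.Ioo m ρ,
    ENNReal.ofReal ((gfn ν t - gfn ν ρ) * wfn ν m + (gfn ν m - gfn ν t) * wfn ν ρ) ∂ν with hI1def
  have hptbd : ∀ t ∈ Set.Ioo m ρ,
      (gfn ν t - gfn ν ρ) * wfn ν m + (gfn ν m - gfn ν t) * wfn ν ρ ≤ wfn ν m + wfn ν ρ := by
    intro t ht
    have h1 : gfn ν t - gfn ν ρ ≤ 1 := by
      linarith [gfn_le_one (ν := ν) t, gfn_nonneg (ν := ν) ρ]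
    have h2 : gfn ν m - gfn ν t ≤ 1 := by
      linarith [gfn_le_one (ν := ν) m, gfn_nonneg (ν := ν) t]
    nlinarith [hwm0, hwρ0]
  have hI1ne : I1 ≠ ⊤ := setlint_ofReal_ne_top (C := wfn ν m + wfn ν ρ) measurableSet_Ioo hptbd
  have hchordint : I1 ≤ ENNReal.ofReal q * I := by
    calc I1 ≤ ∫⁻ t in Set.Ioo m ρ, ENNReal.ofReal (q * wfn ν t) ∂ν := by
          refine lintegral_mono_ae ?_
          filter_upwards [ae_restrict_mem measurableSet_Ioo] with t ht
          exact ENNReal.ofReal_le_ofReal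
            (chord hf0 hν hF hφ hreg hρpos hφρ hm ht.1 ht.2)
      _ = ENNReal.ofReal q * I := by
          have : ∀ t : ℝ, ENNReal.ofReal (q * wfn ν t)
              = ENNReal.ofReal q * ENNReal.ofReal (wfn ν t) := fun t => ENNReal.ofReal_mul hq0
          rw [lintegral_congr this, lintegral_const_mul' _ _ ENNReal.ofReal_ne_top]
  -- the E identity
  have hEIoc : E = ∫⁻ t in Set.Ioc m ρ, ENNReal.ofReal (gfn ν t) ∂ν := by
    have := nu_noAtoms hν
    rw [hEdef, Measure.restrict_congr_set (Ioo_ae_eq_Ioc' (nu_singleton hν ρ))]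
  have hgmeas : Measurable fun t : ℝ => ENNReal.ofReal (gfn ν t) :=
    ENNReal.measurable_ofReal.comp measurable_gfn
  have hsum : ∫⁻ t in Set.Ioc m ρ, ENNReal.ofReal (gfn ν m - gfn ν t) ∂ν + E
      = ENNReal.ofReal (gfn ν m) * ν (Set.Ioc m ρ) := by
    rw [hEIoc, ← lintegral_add_right' _ hgmeas.aemeasurable,
      ← setLIntegral_const (Set.Ioc m ρ) (ENNReal.ofReal (gfn ν m))]
    refine setLIntegral_congr_fun measurableSet_Ioc (fun t ht => ?_)
    rw [← ENNReal.ofReal_add (sub_nonneg.2 (gfn_anti ht.1.le)) (gfn_nonneg t)]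
    congr 1; ring
  have hIocq : ν (Set.Ioc m ρ) = ENNReal.ofReal q := nu_Ioc_eq hν m ρ hmρ.le
  have hEE : E + E = ENNReal.ofReal (gfn ν m * q + q * gfn ν ρ) := by
    have h1 : E + E = ENNReal.ofReal (gfn ν m) * ν (Set.Ioc m ρ)
        + ENNReal.ofReal q * ν (Set.Ioi ρ) := by
      calc E + E = (∫⁻ t in Set.Ioc m ρ, ENNReal.ofReal (gfn ν m - gfn ν t) ∂ν
            + ENNReal.ofReal q * ν (Set.Ioi ρ)) + E := by
            nth_rewrite 1 [hEIoc, LC2 hν m ρ hmρ.le]; rfl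
        _ = (∫⁻ t in Set.Ioc m ρ, ENNReal.ofReal (gfn ν m - gfn ν t) ∂ν + E)
            + ENNReal.ofReal q * ν (Set.Ioi ρ) := by ring
        _ = _ := by rw [hsum]
    rw [h1, hIocq, ofReal_gfn (x := ρ), ← ENNReal.ofReal_mul (gfn_nonneg m),
      ← ENNReal.ofReal_mul hq0,
      ← ENNReal.ofReal_add (mul_nonneg (gfn_nonneg m) hq0) (mul_nonneg hq0 (gfn_nonneg ρ))]
  -- the I1 identity
  have hI1meas : Measurable fun t : ℝ =>
      ENNReal.ofReal ((gfn ν t - gfn ν ρ) * wfn ν m + (gfn ν m - gfn ν t) * wfn ν ρ) := by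
    apply ENNReal.measurable_ofReal.comp
    exact ((measurable_gfn.sub measurable_const).mul measurable_const).add
      ((measurable_const.sub measurable_gfn).mul measurable_const)
  have hwgE : ∀ c : ℝ, 0 ≤ c → ∫⁻ t in Set.Ioo m ρ, ENNReal.ofReal (c * gfn ν t) ∂ν
      = ENNReal.ofReal c * E := by
    intro c hc
    have : ∀ t : ℝ, ENNReal.ofReal (c * gfn ν t)
        = ENNReal.ofReal c * ENNReal.ofReal (gfn ν t) := fun t => ENNReal.ofReal_mul hc
    rw [lintegral_congr this, lintegral_const_mul' _ _ ENNReal.ofReal_ne_top, hEdef]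
  have hI1id : I1 + (ENNReal.ofReal (wfn ν ρ) * E
        + ENNReal.ofReal (wfn ν m * gfn ν ρ * q))
      = ENNReal.ofReal (wfn ν m) * E + ENNReal.ofReal (wfn ν ρ * gfn ν m * q) := by
    have e1 : ∫⁻ t in Set.Ioo m ρ, (ENNReal.ofReal
          ((gfn ν t - gfn ν ρ) * wfn ν m + (gfn ν m - gfn ν t) * wfn ν ρ)
          + (ENNReal.ofReal (wfn ν ρ * gfn ν t)
          + ENNReal.ofReal (wfn ν m * gfn ν ρ))) ∂ν
        = I1 + (ENNReal.ofReal (wfn ν ρ) * E + ENNReal.ofReal (wfn ν m * gfn ν ρ * q)) := by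
      have hmx : Measurable fun t : ℝ => ENNReal.ofReal (wfn ν ρ * gfn ν t)
          + ENNReal.ofReal (wfn ν m * gfn ν ρ) :=
        ((measurable_const.mul measurable_gfn).ennreal_ofReal).add measurable_const
      rw [lintegral_add_right' _ hmx.aemeasurable,
        lintegral_add_right' _ (aemeasurable_const), setLIntegral_const, hI1def, hνIoo,
        ← ENNReal.ofReal_mul (mul_nonneg hwm0 (gfn_nonneg ρ))]
      congr 2
      have : ∀ t : ℝ, ENNReal.ofReal (wfn ν ρ * gfn ν t)
          = ENNReal.ofReal (wfn ν ρ) * ENNReal.ofReal (gfn ν t) :=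
        fun t => ENNReal.ofReal_mul hwρ0
      rw [lintegral_congr this, lintegral_const_mul' _ _ ENNReal.ofReal_ne_top, hEdef]
    have e2 : ∫⁻ t in Set.Ioo m ρ, (ENNReal.ofReal (wfn ν m * gfn ν t)
          + ENNReal.ofReal (wfn ν ρ * gfn ν m)) ∂ν
        = ENNReal.ofReal (wfn ν m) * E + ENNReal.ofReal (wfn ν ρ * gfn ν m * q) := by
      rw [lintegral_add_right' _ (aemeasurable_const), setLIntegral_const, hνIoo,
        ← ENNReal.ofReal_mul (mul_nonneg hwρ0 (gfn_nonneg m))]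
      congr 1
      have : ∀ t : ℝ, ENNReal.ofReal (wfn ν m * gfn ν t)
          = ENNReal.ofReal (wfn ν m) * ENNReal.ofReal (gfn ν t) :=
        fun t => ENNReal.ofReal_mul hwm0
      rw [lintegral_congr this, lintegral_const_mul' _ _ ENNReal.ofReal_ne_top, hEdef]
    rw [← e1, ← e2]
    refine setLIntegral_congr_fun measurableSet_Ioo (fun t ht => ?_)
    have hgtρ : 0 ≤ gfn ν t - gfn ν ρ := sub_nonneg.2 (gfn_anti ht.2.le)
    have hgmt : 0 ≤ gfn ν m - gfn ν t := sub_nonneg.2 (gfn_anti ht.1.le)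
    rw [← ENNReal.ofReal_add (mul_nonneg hwρ0 (gfn_nonneg t)) (mul_nonneg hwm0 (gfn_nonneg ρ)),
      ← ENNReal.ofReal_add (add_nonneg (mul_nonneg hgtρ hwm0)
        (mul_nonneg hgmt hwρ0)) (add_nonneg (mul_nonneg hwρ0 (gfn_nonneg t))
        (mul_nonneg hwm0 (gfn_nonneg ρ))),
      ← ENNReal.ofReal_add (mul_nonneg hwm0 (gfn_nonneg t)) (mul_nonneg hwρ0 (gfn_nonneg m))]
    congr 1; ring
  -- pass to the reals
  set i := I.toReal with hidef
  set e := E.toReal with hedef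
  set i1 := I1.toReal with hi1def2
  have htoE : 2 * e = gfn ν m * q + q * gfn ν ρ := by
    have h := congrArg ENNReal.toReal hEE
    rw [ENNReal.toReal_add hEne hEne, ENNReal.toReal_ofReal
      (add_nonneg (mul_nonneg (gfn_nonneg m) hq0) (mul_nonneg hq0 (gfn_nonneg ρ)))] at h
    rw [hedef]
    linarith [h]
  have htoI1 : i1 + (wfn ν ρ * e + wfn ν m * gfn ν ρ * q)
      = wfn ν m * e + wfn ν ρ * gfn ν m * q := by
    have h := congrArg ENNReal.toReal hI1id
    rw [ENNReal.toReal_add hI1ne (by finiteness),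
      ENNReal.toReal_add (by finiteness) (by finiteness),
      ENNReal.toReal_add (by finiteness) (by finiteness),
      ENNReal.toReal_mul, ENNReal.toReal_mul,
      ENNReal.toReal_ofReal hwρ0, ENNReal.toReal_ofReal hwm0,
      ENNReal.toReal_ofReal (mul_nonneg (mul_nonneg hwm0 (gfn_nonneg ρ)) hq0),
      ENNReal.toReal_ofReal (mul_nonneg (mul_nonneg hwρ0 (gfn_nonneg m)) hq0)] at h
    rw [hedef, hi1def2]
    linarith [h]
  have htoch : i1 ≤ q * i := by
    have := ENNReal.toReal_mono (by finiteness) hchordint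
    rw [ENNReal.toReal_mul, ENNReal.toReal_ofReal hq0, ← hidef, ← hi1def2] at this
    exact this
  -- final real inequality
  have hreal : (wfn ν ρ + wfn ν m) * q ≤ 2 * i := by
    have hid : 2 * i1 = q * q * (wfn ν m + wfn ν ρ) := by
      have h2heq := htoI1
      have h2he := htoE
      rw [hqdef] at h2heq h2he ⊢
      nlinarith [h2heq, h2he]
    rcases eq_or_lt_of_le hq0 with hq | hq
    · rw [← hq]
      simp only [mul_zero]
      positivity
    · have h3 : q * ((wfn ν ρ + wfn ν m) * q) ≤ q * (2 * i) := by nlinarith [htoch, hid]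
      exact le_of_mul_le_mul_left h3 hq
  -- conclude in ℝ≥0∞
  calc ENNReal.ofReal (wfn ν ρ + wfn ν m) * ENNReal.ofReal q
      = ENNReal.ofReal ((wfn ν ρ + wfn ν m) * q) := (ENNReal.ofReal_mul (by positivity)).symm
    _ ≤ ENNReal.ofReal (2 * i) := ENNReal.ofReal_le_ofReal hreal
    _ = 2 * ENNReal.ofReal i := by rw [ENNReal.ofReal_mul (by norm_num)]; norm_num
    _ = 2 * I := by rw [hidef, ENNReal.ofReal_toReal hIne]

end Key1D
section Auction
set_option linter.unusedSectionVars false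
open Finset

variable {n : ℕ}

/-- qualified bid (0 if the reserve is not met) -/
noncomputable def qv (r b : Fin (n + 1) → ℝ) (l : Fin (n + 1)) : ℝ :=
  if r l ≤ b l then b l else 0

/-- threshold for bidder `i` to win; does not depend on `b i`. -/
noncomputable def thr (r : Fin (n + 1) → ℝ) (i : Fin (n + 1)) (b : Fin (n + 1) → ℝ) : ℝ :=
  max (r i) ((Finset.univ.erase i).fold max 0 (qv r b))

lemma qv_nonneg {r b : Fin (n + 1) → ℝ} (hb : ∀ l, 0 ≤ b l) (l : Fin (n + 1)) :
    0 ≤ qv r b l := by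
  unfold qv; split <;> simp [hb l]

lemma thr_nonneg (r : Fin (n + 1) → ℝ) (i : Fin (n + 1)) (b : Fin (n + 1) → ℝ)
    (hr : 0 ≤ r i) : 0 ≤ thr r i b := le_trans hr (le_max_left _ _)

lemma measurable_qv (r : Fin (n + 1) → ℝ) (l : Fin (n + 1)) :
    Measurable fun b : Fin (n + 1) → ℝ => qv r b l := by
  unfold qv
  exact Measurable.ite (measurableSet_le measurable_const (measurable_pi_apply l))
    (measurable_pi_apply l) measurable_const

lemma measurable_thr (r : Fin (n + 1) → ℝ) (i : Fin (n + 1)) :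
    Measurable (thr r i) := by
  unfold thr
  exact measurable_const.max
    (measurable_fold_max_s12 (Finset.univ.erase i) (fun l b => qv r b l)
      (fun l => measurable_qv r l))

/-- Key deterministic rewriting of the eager revenue as a sum of threshold payments. -/
lemma eagerRev_eq_sum (b r : Fin (n + 1) → ℝ)
    (hb : ∀ l, 0 < b l) (hne : ∀ l m, l ≠ m → b l ≠ b m) (hbr : ∀ l, b l ≠ r l)
    (hS0 : ∃ i, r i ≤ b i) :
    eagerRev b r = ∑ i, if thr r i b < b i then thr r i b else 0 := by
  classical
  have hS : (Finset.univ.filter fun i => r i ≤ b i).Nonempty := by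
    obtain ⟨i, hi⟩ := hS0
    exact ⟨i, Finset.mem_filter.2 ⟨Finset.mem_univ i, hi⟩⟩
  set S := Finset.univ.filter fun i => r i ≤ b i with hSdef
  set w := eagerWinner b r hS with hwdef
  have hwmem : w ∈ S.filter fun i => ∀ k ∈ S, b k ≤ b i := Finset.min'_mem _ _
  have hwS : w ∈ S := (Finset.mem_filter.1 hwmem).1
  have hwrb : r w ≤ b w := (Finset.mem_filter.1 hwS).2
  have hwmax : ∀ l ∈ S, b l ≤ b w := (Finset.mem_filter.1 hwmem).2
  have hwthr : thr r w b < b w := by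
    apply max_lt
    · exact lt_of_le_of_ne hwrb (Ne.symm (hbr w))
    · rw [Finset.fold_max_lt]
      refine ⟨hb w, fun l hl => ?_⟩
      have hlw : l ≠ w := (Finset.mem_erase.1 hl).1
      unfold qv
      split
      · rename_i hql
        have : l ∈ S := Finset.mem_filter.2 ⟨Finset.mem_univ l, hql⟩
        exact lt_of_le_of_ne (hwmax l this) (hne l w hlw)
      · exact hb w
  have hrevval : eagerRev b r = thr r w b := by
    rw [eagerRev, dif_pos hS, ← hwdef]
    congr 1
    have hSe : S.erase w = (Finset.univ.erase w).filter fun l => r l ≤ b l := by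
      rw [hSdef]
      ext l
      simp only [Finset.mem_erase, Finset.mem_filter, Finset.mem_univ, true_and]
      tauto
    rw [← hSdef, hSe, fold_filter_ite]
    rfl
  rw [hrevval, Finset.sum_eq_single w]
  · rw [if_pos hwthr]
  · intro i _ hiw
    rw [if_neg]
    push_neg
    rcases le_or_gt (r i) (b i) with hri | hri
    · have hiS : i ∈ S := Finset.mem_filter.2 ⟨Finset.mem_univ i, hri⟩
      have h1 : b i < b w := lt_of_le_of_ne (hwmax i hiS) (hne i w hiw)
      have h2 : b w ≤ thr r i b := by
        refine le_trans ?_ (le_max_right _ _)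
        rw [Finset.le_fold_max]
        refine Or.inr ⟨w, Finset.mem_erase.2 ⟨Ne.symm hiw, Finset.mem_univ w⟩, ?_⟩
        unfold qv
        rw [if_pos hwrb]
      linarith
    · exact le_trans hri.le (le_max_left _ _)
  · intro h
    exact absurd (Finset.mem_univ w) h

end Auction

section Fub
set_option linter.unusedSectionVars false
open Finset

variable {ν : Measure ℝ} [IsProbabilityMeasure ν] {n : ℕ}

lemma FUB (i : Fin (n + 1)) (H : ℝ → (Fin n → ℝ) → ℝ≥0∞)
    (hH : Measurable fun p : ℝ × (Fin n → ℝ) => H p.1 p.2) :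
    ∫⁻ b, H (b i) (fun l => b (i.succAbove l)) ∂(Measure.pi fun _ : Fin (n + 1) => ν)
      = ∫⁻ y, ∫⁻ t, H t y ∂ν ∂(Measure.pi fun _ : Fin n => ν) := by
  have h1 := (measurePreserving_piFinSuccAbove (fun _ : Fin (n + 1) => ν) i).lintegral_comp hH
  have h2 : ∫⁻ b, H (b i) (fun l => b (i.succAbove l)) ∂(Measure.pi fun _ : Fin (n + 1) => ν)
      = ∫⁻ p : ℝ × (Fin n → ℝ), H p.1 p.2 ∂(ν.prod (Measure.pi fun _ : Fin n => ν)) := h1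
  rw [h2, lintegral_prod_symm _ hH.aemeasurable]

lemma lint_perm (σ : Equiv.Perm (Fin (n + 1))) (g : (Fin (n + 1) → ℝ) → ℝ≥0∞)
    (hg : Measurable g) :
    ∫⁻ b, g (fun l => b (σ l)) ∂(Measure.pi fun _ : Fin (n + 1) => ν)
      = ∫⁻ b, g b ∂(Measure.pi fun _ : Fin (n + 1) => ν) := by
  have hmp := Measure.pi_map_piCongrLeft σ.symm (fun _ : Fin (n + 1) => ν)
  conv_rhs => rw [← hmp]
  rw [lintegral_map hg (MeasurableEquiv.measurable _)]
  refine lintegral_congr fun b => ?_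
  congr 1
  ext l
  simp [MeasurableEquiv.piCongrLeft, Equiv.piCongrLeft]

lemma nullA (i : Fin (n + 1)) (S : Set ℝ) (hS : MeasurableSet S) (h0 : ν S = 0) :
    (Measure.pi fun _ : Fin (n + 1) => ν) {b | b i ∈ S} = 0 := by
  classical
  have hset : {b : Fin (n + 1) → ℝ | b i ∈ S}
      = Set.pi Set.univ (Function.update (fun _ : Fin (n + 1) => (Set.univ : Set ℝ)) i S) := by
    ext b
    simp only [Set.mem_setOf_eq, Set.mem_pi, Set.mem_univ, forall_true_left]
    constructor
    · intro hb l
      by_cases hl : l = i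
      · subst hl; rw [Function.update_self]; exact hb
      · rw [Function.update_of_ne hl]; trivial
    · intro hb
      have := hb i
      rwa [Function.update_self] at this
  rw [hset, Measure.pi_pi]
  refine Finset.prod_eq_zero (Finset.mem_univ i) ?_
  rw [Function.update_self]; exact h0

lemma nullB (i l : Fin (n + 1)) (hil : l ≠ i) (hsing : ∀ c : ℝ, ν {c} = 0) :
    (Measure.pi fun _ : Fin (n + 1) => ν) {b | b i = b l} = 0 := by
  obtain ⟨c, hc⟩ := Fin.exists_succAbove_eq hil
  have hmeas : MeasurableSet {b : Fin (n + 1) → ℝ | b i = b l} :=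
    measurableSet_eq_fun (measurable_pi_apply i) (measurable_pi_apply l)
  have h1 : (Measure.pi fun _ : Fin (n + 1) => ν) {b | b i = b l}
      = ∫⁻ b, (if b i = b (i.succAbove c) then 1 else 0)
          ∂(Measure.pi fun _ : Fin (n + 1) => ν) := by
    rw [← lintegral_indicator_one hmeas]
    refine lintegral_congr fun b => ?_
    rw [hc]
    by_cases h : b i = b l <;> simp [Set.indicator, h]
  have h2 := FUB (ν := ν) i (fun t y => if t = y c then 1 else 0) (by
    refine Measurable.ite ?_ measurable_const measurable_const
    exact measurableSet_eq_fun measurable_fst ((measurable_pi_apply c).comp measurable_snd))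
  rw [h1, h2]
  have : ∀ y : Fin n → ℝ, ∫⁻ t, (if t = y c then 1 else 0) ∂ν = 0 := by
    intro y
    have : ∀ t : ℝ, (if t = y c then (1 : ℝ≥0∞) else 0) = ({y c} : Set ℝ).indicator 1 t := by
      intro t
      by_cases h : t = y c <;> simp [Set.indicator, h]
    rw [lintegral_congr this, lintegral_indicator_one (measurableSet_singleton _), hsing]
  simp [this]

end Fub

section Comp
set_option linter.unusedSectionVars false
open Finset

variable {n k : ℕ} {ρ : ℝ}

/-- uniform family of reserve vectors: `ρ` on the first `k` coordinates -/
noncomputable def rA (n k : ℕ) (ρ : ℝ) : Fin (n + 1) → ℝ := fun i => if (i : ℕ) < k then ρ else 0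

lemma rA_nonneg (hρ : 0 ≤ ρ) (l : Fin (n + 1)) : 0 ≤ rA n k ρ l := by
  unfold rA; split <;> simp [hρ]

lemma rA_eq {l : Fin (n + 1)} (hl : (l : ℕ) ≠ k) : rA n (k + 1) ρ l = rA n k ρ l := by
  unfold rA
  by_cases h : (l : ℕ) < k
  · rw [if_pos (by omega), if_pos h]
  · rw [if_neg (by omega), if_neg h]

lemma qv_agree {l : Fin (n + 1)} (b : Fin (n + 1) → ℝ) (hl : (l : ℕ) ≠ k) :
    qv (rA n (k + 1) ρ) b l = qv (rA n k ρ) b l := by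
  unfold qv; rw [rA_eq hl]

lemma fold_qv_agree (b : Fin (n + 1) → ℝ) {s : Finset (Fin (n + 1))}
    (hs : ∀ l ∈ s, (l : ℕ) ≠ k) :
    s.fold max 0 (qv (rA n (k + 1) ρ) b) = s.fold max 0 (qv (rA n k ρ) b) :=
  Finset.fold_congr fun l hl => qv_agree b (hs l hl)

lemma thr_split {r : Fin (n + 1) → ℝ} {i j : Fin (n + 1)} (hij : i ≠ j) (b : Fin (n + 1) → ℝ) :
    thr r i b = max (r i) (max (qv r b j)
      (((Finset.univ.erase i).erase j).fold max 0 (qv r b))) := by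
  unfold thr
  congr 1
  conv_lhs => rw [← Finset.insert_erase (Finset.mem_erase.2 ⟨Ne.symm hij, Finset.mem_univ j⟩)]
  rw [Finset.fold_insert (Finset.notMem_erase j _)]

variable {j : Fin (n + 1)} (hj : (j : ℕ) = k)

include hj in
/-- C1 : treated bidders see no change -/
lemma thr_treated {i : Fin (n + 1)} (hi : (i : ℕ) < k) (b : Fin (n + 1) → ℝ)
    (hbj : 0 ≤ b j) : thr (rA n (k + 1) ρ) i b = thr (rA n k ρ) i b := by
  have hij : i ≠ j := fun h => by subst h; omega
  rw [thr_split hij b, thr_split hij b,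
    fold_qv_agree b (fun l hl => by
      have h1 := (Finset.mem_erase.1 hl).1
      exact fun hc => h1 (Fin.ext (by rw [hc, hj])))]
  have hri : rA n (k + 1) ρ i = rA n k ρ i := rA_eq (by omega)
  rw [hri]
  have hq0 : qv (rA n k ρ) b j = b j := by
    have h1 : rA n k ρ j = 0 := by unfold rA; rw [if_neg (show ¬((j : ℕ) < k) by omega)]
    unfold qv; rw [h1, if_pos hbj]
  have hq1 : qv (rA n (k + 1) ρ) b j = if ρ ≤ b j then b j else 0 := by
    have h1 : rA n (k + 1) ρ j = ρ := by unfold rA; rw [if_pos (show (j : ℕ) < k + 1 by omega)]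
    unfold qv; rw [h1]
  have hriv : rA n k ρ i = ρ := by unfold rA; rw [if_pos hi]
  rw [hq0, hq1, hriv]
  by_cases h : ρ ≤ b j
  · rw [if_pos h]
  · rw [if_neg h]
    push_neg at h
    set M := ((Finset.univ.erase i).erase j).fold max 0 (qv (rA n k ρ) b) with hM
    have hM0 : 0 ≤ M := fold_max_nonneg _ _
    rw [max_eq_right hM0, ← max_assoc, max_eq_left h.le]

include hj in
/-- C2 : bidder j's thresholds -/
lemma thr_j0 (b : Fin (n + 1) → ℝ) :
    thr (rA n k ρ) j b = (Finset.univ.erase j).fold max 0 (qv (rA n k ρ) b) := by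
  have h1 : rA n k ρ j = 0 := by unfold rA; rw [if_neg (show ¬((j : ℕ) < k) by omega)]
  unfold thr
  rw [h1, max_eq_right (fold_max_nonneg _ _)]

include hj in
lemma thr_j1 (b : Fin (n + 1) → ℝ) :
    thr (rA n (k + 1) ρ) j b
      = max ρ ((Finset.univ.erase j).fold max 0 (qv (rA n k ρ) b)) := by
  have h1 : rA n (k + 1) ρ j = ρ := by
    unfold rA; rw [if_pos (show (j : ℕ) < k + 1 by omega)]
  unfold thr
  rw [h1]
  congr 1
  refine fold_qv_agree b (fun l hl => fun hc => (Finset.mem_erase.1 hl).1 (Fin.ext ?_))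
  rw [hc, hj]

include hj in
/-- C3 : untreated bidders: threshold weakly decreases, staying under ρ when it moves -/
lemma thr_untreated {i : Fin (n + 1)} (hi : k < (i : ℕ)) (b : Fin (n + 1) → ℝ)
    (hbj : 0 ≤ b j) :
    thr (rA n (k + 1) ρ) i b = thr (rA n k ρ) i b
      ∨ (thr (rA n (k + 1) ρ) i b ≤ thr (rA n k ρ) i b ∧ thr (rA n k ρ) i b ≤ ρ) := by
  have hij : i ≠ j := fun h => by subst h; omega
  rw [thr_split hij b, thr_split hij b,
    fold_qv_agree b (fun l hl => by
      have h1 := (Finset.mem_erase.1 hl).1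
      exact fun hc => h1 (Fin.ext (by rw [hc, hj])))]
  have hri : rA n (k + 1) ρ i = rA n k ρ i := rA_eq (by omega)
  have hriv : rA n k ρ i = 0 := by
    unfold rA; rw [if_neg (show ¬((i : ℕ) < k) by omega)]
  have hq0 : qv (rA n k ρ) b j = b j := by
    have h1 : rA n k ρ j = 0 := by unfold rA; rw [if_neg (show ¬((j : ℕ) < k) by omega)]
    unfold qv; rw [h1, if_pos hbj]
  have hq1 : qv (rA n (k + 1) ρ) b j = if ρ ≤ b j then b j else 0 := by
    have h1 : rA n (k + 1) ρ j = ρ := by unfold rA; rw [if_pos (show (j : ℕ) < k + 1 by omega)]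
    unfold qv; rw [h1]
  rw [hri, hriv, hq0, hq1]
  set M := ((Finset.univ.erase i).erase j).fold max 0 (qv (rA n k ρ) b) with hM
  have hM0 : 0 ≤ M := fold_max_nonneg _ _
  by_cases h : ρ ≤ b j
  · left; rw [if_pos h]
  · push_neg at h
    rw [if_neg (not_le.2 h)]
    rcases le_total (b j) M with h1 | h1
    · left
      congr 1
      rw [max_eq_right hM0, max_eq_right h1]
    · right
      have hLHS : max (0:ℝ) (max 0 M) = M := by
        rw [max_eq_right hM0, max_eq_right hM0]
      have hRHS : max (0:ℝ) (max (b j) M) = b j := by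
        rw [max_eq_left h1, max_eq_right hbj]
      rw [hLHS, hRHS]
      exact ⟨h1, h.le⟩

end Comp

section Comp2
set_option linter.unusedSectionVars false
open Finset

variable {ν : Measure ℝ} [IsProbabilityMeasure ν]
variable {n k : ℕ} {ρ : ℝ} {j : Fin (n + 1)} (hj : (j : ℕ) = k)

include hj in
/-- C4 : pointwise gain bound on generic bid vectors -/
lemma gain_le (hkn : k + 1 ≤ n) (hρpos : 0 < ρ) (b : Fin (n + 1) → ℝ)
    (hb : ∀ l, 0 < b l) (hne : ∀ l m, l ≠ m → b l ≠ b m) :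
    ENNReal.ofReal (wfn ν (thr (rA n (k + 1) ρ) j b))
        - ENNReal.ofReal (wfn ν (thr (rA n k ρ) j b))
      ≤ ∑ i ∈ Finset.univ.filter (fun l : Fin (n + 1) => k < (l : ℕ)),
          (if (((Finset.univ.erase i).erase j).fold max 0 (qv (rA n k ρ) b) < b i ∧ b i < ρ
              ∧ ∀ l : Fin (n + 1), (l : ℕ) < k → b l < ρ)
            then (ENNReal.ofReal (wfn ν ρ) - ENNReal.ofReal (wfn ν (b i))) else 0) := by
  classical
  rw [thr_j1 hj b, thr_j0 hj b]
  set M := (Finset.univ.erase j).fold max 0 (qv (rA n k ρ) b) with hMdef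
  by_cases hMρ : ρ ≤ M
  · rw [max_eq_right hMρ, tsub_self]
    exact zero_le
  push_neg at hMρ
  have htr : ∀ l : Fin (n + 1), (l : ℕ) < k → b l < ρ := by
    intro l hl
    by_contra hge
    push_neg at hge
    have hlj : l ≠ j := fun h => by subst h; omega
    have hql : qv (rA n k ρ) b l = b l := by
      have h1 : rA n k ρ l = ρ := by unfold rA; rw [if_pos hl]
      unfold qv; rw [h1, if_pos hge]
    have : b l ≤ M := by
      rw [hMdef, Finset.le_fold_max]
      exact Or.inr ⟨l, Finset.mem_erase.2 ⟨hlj, Finset.mem_univ l⟩, le_of_eq hql.symm⟩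
    linarith
  have hUne : (Finset.univ.filter (fun l : Fin (n + 1) => k < (l : ℕ))).Nonempty :=
    ⟨⟨n, by omega⟩, Finset.mem_filter.2 ⟨Finset.mem_univ _, by simpa using by omega⟩⟩
  obtain ⟨i0, hi0U, hi0max⟩ := Finset.exists_max_image _ b hUne
  have hi0k : k < (i0 : ℕ) := (Finset.mem_filter.1 hi0U).2
  have hi0j : i0 ≠ j := fun h => by subst h; omega
  have hqv_i0 : qv (rA n k ρ) b i0 = b i0 := by
    have h1 : rA n k ρ i0 = 0 := by
      unfold rA; rw [if_neg (show ¬((i0 : ℕ) < k) by omega)]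
    unfold qv; rw [h1, if_pos (hb i0).le]
  have hbM : M = b i0 := by
    refine le_antisymm ?_ ?_
    · rw [hMdef, Finset.fold_max_le]
      refine ⟨(hb i0).le, fun l hl => ?_⟩
      have hlj : l ≠ j := (Finset.mem_erase.1 hl).1
      rcases lt_trichotomy (l : ℕ) k with h | h | h
      · have : qv (rA n k ρ) b l = if ρ ≤ b l then b l else 0 := by
          have h1 : rA n k ρ l = ρ := by unfold rA; rw [if_pos h]
          unfold qv; rw [h1]
        rw [this, if_neg (not_le.2 (htr l h))]
        exact (hb i0).le
      · exact absurd (Fin.ext (h.trans hj.symm)) hlj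
      · have : qv (rA n k ρ) b l = b l := by
          have h1 : rA n k ρ l = 0 := by
            unfold rA; rw [if_neg (show ¬((l : ℕ) < k) by omega)]
          unfold qv; rw [h1, if_pos (hb l).le]
        rw [this]
        exact hi0max l (Finset.mem_filter.2 ⟨Finset.mem_univ l, h⟩)
    · rw [hMdef, Finset.le_fold_max]
      exact Or.inr ⟨i0, Finset.mem_erase.2 ⟨hi0j, Finset.mem_univ i0⟩, le_of_eq hqv_i0.symm⟩
  have hi0ρ : b i0 < ρ := hbM ▸ hMρ
  have hmI : ((Finset.univ.erase i0).erase j).fold max 0 (qv (rA n k ρ) b) < b i0 := by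
    rw [Finset.fold_max_lt]
    refine ⟨hb i0, fun l hl => ?_⟩
    have hlj : l ≠ j := (Finset.mem_erase.1 hl).1
    have hli0 : l ≠ i0 := (Finset.mem_erase.1 (Finset.mem_erase.1 hl).2).1
    rcases lt_trichotomy (l : ℕ) k with h | h | h
    · have : qv (rA n k ρ) b l = if ρ ≤ b l then b l else 0 := by
        have h1 : rA n k ρ l = ρ := by unfold rA; rw [if_pos h]
        unfold qv; rw [h1]
      rw [this, if_neg (not_le.2 (htr l h))]
      exact hb i0
    · exact absurd (Fin.ext (h.trans hj.symm)) hlj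
    · have : qv (rA n k ρ) b l = b l := by
        have h1 : rA n k ρ l = 0 := by
          unfold rA; rw [if_neg (show ¬((l : ℕ) < k) by omega)]
        unfold qv; rw [h1, if_pos (hb l).le]
      rw [this]
      exact lt_of_le_of_ne (hi0max l (Finset.mem_filter.2 ⟨Finset.mem_univ l, h⟩))
        (hne l i0 hli0)
  calc ENNReal.ofReal (wfn ν (max ρ M)) - ENNReal.ofReal (wfn ν M)
      = (if (((Finset.univ.erase i0).erase j).fold max 0 (qv (rA n k ρ) b) < b i0 ∧ b i0 < ρ
          ∧ ∀ l : Fin (n + 1), (l : ℕ) < k → b l < ρ)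
        then (ENNReal.ofReal (wfn ν ρ) - ENNReal.ofReal (wfn ν (b i0))) else 0) := by
        rw [if_pos ⟨hmI, hi0ρ, htr⟩, max_eq_left hMρ.le, hbM]
    _ ≤ _ := by
        exact Finset.single_le_sum (f := fun i : Fin (n + 1) =>
          (if (((Finset.univ.erase i).erase j).fold max 0 (qv (rA n k ρ) b) < b i ∧ b i < ρ
              ∧ ∀ l : Fin (n + 1), (l : ℕ) < k → b l < ρ)
            then (ENNReal.ofReal (wfn ν ρ) - ENNReal.ofReal (wfn ν (b i))) else 0))
          (fun l _ => zero_le) hi0U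

include hj in
/-- C5 : pointwise loss bound -/
lemma loss_ge {i : Fin (n + 1)} (hik : k < (i : ℕ)) (b : Fin (n + 1) → ℝ) :
    (if (((Finset.univ.erase i).erase j).fold max 0 (qv (rA n k ρ) b) < b j ∧ b j < ρ
        ∧ ∀ l : Fin (n + 1), (l : ℕ) < k → b l < ρ)
      then (ENNReal.ofReal (wfn ν (b j))
        - ENNReal.ofReal (wfn ν (((Finset.univ.erase i).erase j).fold max 0 (qv (rA n k ρ) b))))
      else 0)
    ≤ ENNReal.ofReal (wfn ν (thr (rA n k ρ) i b))
      - ENNReal.ofReal (wfn ν (thr (rA n (k + 1) ρ) i b)) := by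
  classical
  split
  case isFalse => exact zero_le
  case isTrue hcond =>
    obtain ⟨h1, h2, _⟩ := hcond
    have hij : i ≠ j := fun h => by subst h; omega
    set m := ((Finset.univ.erase i).erase j).fold max 0 (qv (rA n k ρ) b) with hmdef
    have hm0 : 0 ≤ m := fold_max_nonneg _ _
    have hbj0 : 0 ≤ b j := le_trans hm0 h1.le
    have hri0 : rA n k ρ i = 0 := by
      unfold rA; rw [if_neg (show ¬((i : ℕ) < k) by omega)]
    have hri1 : rA n (k + 1) ρ i = 0 := by
      unfold rA; rw [if_neg (show ¬((i : ℕ) < k + 1) by omega)]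
    have ht0 : thr (rA n k ρ) i b = b j := by
      rw [thr_split hij b, hri0]
      have hq : qv (rA n k ρ) b j = b j := by
        have hr : rA n k ρ j = 0 := by
          unfold rA; rw [if_neg (show ¬((j : ℕ) < k) by omega)]
        unfold qv; rw [hr, if_pos hbj0]
      rw [hq, ← hmdef, max_eq_left h1.le, max_eq_right hbj0]
    have ht1 : thr (rA n (k + 1) ρ) i b = m := by
      rw [thr_split hij b, hri1]
      have hq : qv (rA n (k + 1) ρ) b j = 0 := by
        have hr : rA n (k + 1) ρ j = ρ := by
          unfold rA; rw [if_pos (show (j : ℕ) < k + 1 by omega)]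
        unfold qv; rw [hr, if_neg (not_le.2 h2)]
      rw [hq]
      have : ((Finset.univ.erase i).erase j).fold max 0 (qv (rA n (k + 1) ρ) b) = m := by
        rw [hmdef]
        refine fold_qv_agree b (fun l hl => ?_)
        exact fun hc => (Finset.mem_erase.1 hl).1 (Fin.ext (by rw [hc, hj]))
      rw [this, max_eq_right hm0, max_eq_right hm0]
    rw [ht0, ht1]

/-- C6 : the swap identity -/
lemma swap_ind {i : Fin (n + 1)} (hik : k < (i : ℕ)) (hjk : (j : ℕ) = k)
    (b : Fin (n + 1) → ℝ) :
    (if (((Finset.univ.erase i).erase j).fold max 0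
          (qv (rA n k ρ) (fun l => b (Equiv.swap i j l))) < (fun l => b (Equiv.swap i j l)) i
        ∧ (fun l => b (Equiv.swap i j l)) i < ρ
        ∧ ∀ l : Fin (n + 1), (l : ℕ) < k → (fun l => b (Equiv.swap i j l)) l < ρ)
      then (ENNReal.ofReal (wfn ν ρ)
        - ENNReal.ofReal (wfn ν ((fun l => b (Equiv.swap i j l)) i))) else 0)
    = (if (((Finset.univ.erase i).erase j).fold max 0 (qv (rA n k ρ) b) < b j ∧ b j < ρ
        ∧ ∀ l : Fin (n + 1), (l : ℕ) < k → b l < ρ)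
      then (ENNReal.ofReal (wfn ν ρ) - ENNReal.ofReal (wfn ν (b j))) else 0) := by
  classical
  have hij : i ≠ j := fun h => by subst h; omega
  have hsw : (fun l => b (Equiv.swap i j l)) i = b j := by
    simp [Equiv.swap_apply_left]
  have hm : ((Finset.univ.erase i).erase j).fold max 0
      (qv (rA n k ρ) (fun l => b (Equiv.swap i j l)))
      = ((Finset.univ.erase i).erase j).fold max 0 (qv (rA n k ρ) b) := by
    refine Finset.fold_congr fun l hl => ?_
    have hlj : l ≠ j := (Finset.mem_erase.1 hl).1
    have hli : l ≠ i := (Finset.mem_erase.1 (Finset.mem_erase.1 hl).2).1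
    unfold qv
    simp only [Equiv.swap_apply_of_ne_of_ne hli hlj]
  have htr : (∀ l : Fin (n + 1), (l : ℕ) < k → (fun l => b (Equiv.swap i j l)) l < ρ)
      ↔ (∀ l : Fin (n + 1), (l : ℕ) < k → b l < ρ) := by
    refine forall_congr' fun l => ?_
    by_cases hl : (l : ℕ) < k
    · have hli : l ≠ i := fun h => by subst h; omega
      have hlj : l ≠ j := fun h => by subst h; omega
      simp only [hl, forall_true_left, Equiv.swap_apply_of_ne_of_ne hli hlj]
    · simp [hl]
  rw [hsw, hm]
  exact if_congr (and_congr Iff.rfl (and_congr Iff.rfl htr)) rfl rfl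

end Comp2

section Peq
set_option linter.unusedSectionVars false
open Finset

variable {ν : Measure ℝ} [IsProbabilityMeasure ν] {n : ℕ}

lemma thr_comp (r : Fin (n + 1) → ℝ) (i : Fin (n + 1)) (b : Fin (n + 1) → ℝ) :
    thr r i b = max (r i) (Finset.univ.fold max 0 (fun l : Fin n =>
      if r (i.succAbove l) ≤ b (i.succAbove l) then b (i.succAbove l) else 0)) := by
  unfold thr
  congr 1
  have himg : Finset.univ.image i.succAbove = Finset.univ.erase i := by
    rw [Fin.image_succAbove_univ]; exact Finset.compl_singleton i
  rw [← himg, Finset.fold_image (fun x _ y _ h => (Fin.succAbove_right_injective (p := i)) h)]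
  rfl

lemma P_eq (r : Fin (n + 1) → ℝ) (hr : ∀ l, 0 ≤ r l) (i : Fin (n + 1)) :
    ∫⁻ b, (if thr r i b < b i then ENNReal.ofReal (thr r i b) else 0)
        ∂(Measure.pi fun _ : Fin (n + 1) => ν)
      = ∫⁻ b, ENNReal.ofReal (wfn ν (thr r i b)) ∂(Measure.pi fun _ : Fin (n + 1) => ν) := by
  classical
  set T : (Fin n → ℝ) → ℝ := fun y => max (r i) (Finset.univ.fold max 0 (fun l : Fin n =>
    if r (i.succAbove l) ≤ y l then y l else 0)) with hTdef
  have hthr : ∀ b : Fin (n + 1) → ℝ, thr r i b = T (fun l => b (i.succAbove l)) :=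
    fun b => thr_comp r i b
  have hTmeas : Measurable T := measurable_const.max (measurable_fold_max_s12 Finset.univ
    (fun l (y : Fin n → ℝ) => if r (i.succAbove l) ≤ y l then y l else 0)
    (fun l => show Measurable fun y : Fin n → ℝ =>
        if r (i.succAbove l) ≤ y l then y l else 0 from
      Measurable.ite (measurableSet_le measurable_const (measurable_pi_apply l))
        (measurable_pi_apply l) measurable_const))
  have hT0 : ∀ y, 0 ≤ T y := fun y => le_trans (hr i) (le_max_left _ _)
  have hL : ∫⁻ b, (if thr r i b < b i then ENNReal.ofReal (thr r i b) else 0)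
        ∂(Measure.pi fun _ : Fin (n + 1) => ν)
      = ∫⁻ y, ∫⁻ t, (if T y < t then ENNReal.ofReal (T y) else 0) ∂ν
          ∂(Measure.pi fun _ : Fin n => ν) := by
    rw [← FUB (ν := ν) i (fun t y => if T y < t then ENNReal.ofReal (T y) else 0)
      (Measurable.ite (measurableSet_lt (hTmeas.comp measurable_snd) measurable_fst)
        ((hTmeas.comp measurable_snd).ennreal_ofReal) measurable_const)]
    exact lintegral_congr fun b => by rw [hthr b]
  have hR : ∫⁻ b, ENNReal.ofReal (wfn ν (thr r i b)) ∂(Measure.pi fun _ : Fin (n + 1) => ν)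
      = ∫⁻ y, ∫⁻ t, ENNReal.ofReal (wfn ν (T y)) ∂ν ∂(Measure.pi fun _ : Fin n => ν) := by
    rw [← FUB (ν := ν) i (fun _ y => ENNReal.ofReal (wfn ν (T y)))
      (((measurable_wfn.comp hTmeas).comp measurable_snd).ennreal_ofReal)]
    exact lintegral_congr fun b => by rw [hthr b]
  rw [hL, hR]
  refine lintegral_congr fun y => ?_
  have hinner1 : ∫⁻ t, (if T y < t then ENNReal.ofReal (T y) else 0) ∂ν
      = ENNReal.ofReal (T y) * ν (Set.Ioi (T y)) := by
    have h1 : ∀ t, (if T y < t then ENNReal.ofReal (T y) else 0)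
        = (Set.Ioi (T y)).indicator (fun _ => ENNReal.ofReal (T y)) t := fun t => by
      by_cases h : T y < t <;> simp [Set.indicator, h, Set.mem_Ioi]
    rw [lintegral_congr h1, lintegral_indicator measurableSet_Ioi, setLIntegral_const]
  have hinner2 : ∫⁻ t, ENNReal.ofReal (wfn ν (T y)) ∂ν = ENNReal.ofReal (wfn ν (T y)) := by
    rw [lintegral_const, measure_univ, mul_one]
  rw [hinner1, hinner2, ofReal_gfn, ← ENNReal.ofReal_mul (hT0 y)]
  rfl

end Peq

section C7
set_option linter.unusedSectionVars false
open Finset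

variable {ν : Measure ℝ} [IsProbabilityMeasure ν]
  {f F φ : ℝ → ℝ} {ρ : ℝ}
  (hf0 : ∀ x, 0 ≤ f x)
  (hν : ν = volume.withDensity fun x => ENNReal.ofReal (f x))
  (hF : ∀ x, F x = (ν (Set.Iic x)).toReal)
  (hφ : ∀ x, φ x = x - (1 - F x) / f x)
  (hreg : MonotoneOn φ (Set.Ici 0))
  (hρpos : 0 < ρ) (hφρ : φ ρ = 0)
  {n k : ℕ} {j : Fin (n + 1)} (hj : (j : ℕ) = k)

include hf0 hν hF hφ hreg hρpos hφρ hj in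
lemma C7 {i : Fin (n + 1)} (hik : k < (i : ℕ)) :
    ∫⁻ b, (if (((Finset.univ.erase i).erase j).fold max 0 (qv (rA n k ρ) b) < b j ∧ b j < ρ
          ∧ ∀ l : Fin (n + 1), (l : ℕ) < k → b l < ρ)
        then (ENNReal.ofReal (wfn ν ρ) - ENNReal.ofReal (wfn ν (b j))) else 0)
        ∂(Measure.pi fun _ : Fin (n + 1) => ν)
    ≤ ∫⁻ b, (if (((Finset.univ.erase i).erase j).fold max 0 (qv (rA n k ρ) b) < b j ∧ b j < ρ
          ∧ ∀ l : Fin (n + 1), (l : ℕ) < k → b l < ρ)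
        then (ENNReal.ofReal (wfn ν (b j))
          - ENNReal.ofReal (wfn ν (((Finset.univ.erase i).erase j).fold max 0
              (qv (rA n k ρ) b)))) else 0)
        ∂(Measure.pi fun _ : Fin (n + 1) => ν) := by
  classical
  have hij : i ≠ j := fun h => by subst h; omega
  obtain ⟨c, hc⟩ := Fin.exists_succAbove_eq (Ne.symm (fun h => hij h.symm) : i ≠ j)
  -- hc : j.succAbove c = i
  set MY : (Fin n → ℝ) → ℝ := fun y => (Finset.univ.erase c).fold max 0
    (fun d => if rA n k ρ (j.succAbove d) ≤ y d then y d else 0) with hMYdef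
  have hMYmeas : Measurable MY := measurable_fold_max_s12 _
    (fun d (y : Fin n → ℝ) => if rA n k ρ (j.succAbove d) ≤ y d then y d else 0)
    (fun d => show Measurable fun y : Fin n → ℝ =>
        if rA n k ρ (j.succAbove d) ≤ y d then y d else 0 from
      Measurable.ite (measurableSet_le measurable_const (measurable_pi_apply d))
        (measurable_pi_apply d) measurable_const)
  have hMY0 : ∀ y, 0 ≤ MY y := fun y => fold_max_nonneg _ _
  have hset : (Finset.univ.erase i).erase j = Finset.image j.succAbove (Finset.univ.erase c) := by
    ext l
    simp only [Finset.mem_erase, Finset.mem_univ, and_true, Finset.mem_image]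
    constructor
    · rintro ⟨hlj, hli⟩
      obtain ⟨d, hd⟩ := Fin.exists_succAbove_eq hlj
      refine ⟨d, ?_, hd⟩
      exact fun hdc => hli (by rw [← hd, hdc, hc])
    · rintro ⟨d, hdc, hd2⟩
      constructor
      · rw [← hd2]; exact Fin.succAbove_ne j d
      · rw [← hd2]
        exact fun h => hdc ((Fin.succAbove_right_injective (p := j)) (h.trans hc.symm))
  have hmI : ∀ b : Fin (n + 1) → ℝ,
      ((Finset.univ.erase i).erase j).fold max 0 (qv (rA n k ρ) b)
        = MY (fun l => b (j.succAbove l)) := by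
    intro b
    rw [hset, Finset.fold_image (fun x _ y _ h => (Fin.succAbove_right_injective (p := j)) h)]
    rfl
  have hTr : ∀ b : Fin (n + 1) → ℝ,
      (∀ l : Fin (n + 1), (l : ℕ) < k → b l < ρ)
        ↔ (∀ d : Fin n, ((j.succAbove d : Fin (n + 1)) : ℕ) < k → b (j.succAbove d) < ρ) := by
    intro b
    constructor
    · intro h d hd; exact h _ hd
    · intro h l hl
      have hlj : l ≠ j := fun hh => by subst hh; omega
      obtain ⟨d, hd⟩ := Fin.exists_succAbove_eq hlj
      rw [← hd]; exact h d (by rw [hd]; exact hl)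
  set TrY : (Fin n → ℝ) → Prop := fun y =>
    ∀ d : Fin n, ((j.succAbove d : Fin (n + 1)) : ℕ) < k → y d < ρ with hTrYdef
  have hTrYmeas : MeasurableSet {y : Fin n → ℝ | TrY y} := by
    have : {y : Fin n → ℝ | TrY y} = ⋂ d : Fin n,
        {y : Fin n → ℝ | ((j.succAbove d : Fin (n + 1)) : ℕ) < k → y d < ρ} := by
      ext y; simp [TrY, Set.mem_iInter]
    rw [this]
    refine MeasurableSet.iInter fun d => ?_
    by_cases hd : ((j.succAbove d : Fin (n + 1)) : ℕ) < k
    · have : {y : Fin n → ℝ | ((j.succAbove d : Fin (n + 1)) : ℕ) < k → y d < ρ}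
          = {y : Fin n → ℝ | y d < ρ} := by ext y; simp [hd]
      rw [this]
      exact measurableSet_lt (measurable_pi_apply d) measurable_const
    · have : {y : Fin n → ℝ | ((j.succAbove d : Fin (n + 1)) : ℕ) < k → y d < ρ}
          = Set.univ := by ext y; simp [hd]
      rw [this]; exact MeasurableSet.univ
  -- the two H functions
  set HL : ℝ → (Fin n → ℝ) → ℝ≥0∞ := fun t y =>
    if (MY y < t ∧ t < ρ ∧ TrY y)
      then (ENNReal.ofReal (wfn ν ρ) - ENNReal.ofReal (wfn ν t)) else 0 with hHLdef
  set HR : ℝ → (Fin n → ℝ) → ℝ≥0∞ := fun t y =>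
    if (MY y < t ∧ t < ρ ∧ TrY y)
      then (ENNReal.ofReal (wfn ν t) - ENNReal.ofReal (wfn ν (MY y))) else 0 with hHRdef
  have hcondmeas : MeasurableSet {p : ℝ × (Fin n → ℝ) | MY p.2 < p.1 ∧ p.1 < ρ ∧ TrY p.2} := by
    refine MeasurableSet.inter ?_ (MeasurableSet.inter ?_ ?_)
    · exact measurableSet_lt (hMYmeas.comp measurable_snd) measurable_fst
    · exact measurableSet_lt measurable_fst measurable_const
    · exact measurable_snd hTrYmeas
  have hHLmeas : Measurable fun p : ℝ × (Fin n → ℝ) => HL p.1 p.2 := by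
    refine Measurable.ite hcondmeas ?_ measurable_const
    exact Measurable.sub measurable_const
      ((measurable_wfn.comp measurable_fst).ennreal_ofReal)
  have hHRmeas : Measurable fun p : ℝ × (Fin n → ℝ) => HR p.1 p.2 := by
    refine Measurable.ite hcondmeas ?_ measurable_const
    exact Measurable.sub ((measurable_wfn.comp measurable_fst).ennreal_ofReal)
      (((measurable_wfn.comp hMYmeas).comp measurable_snd).ennreal_ofReal)
  have hLrw : ∀ b : Fin (n + 1) → ℝ,
      (if (((Finset.univ.erase i).erase j).fold max 0 (qv (rA n k ρ) b) < b j ∧ b j < ρ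
          ∧ ∀ l : Fin (n + 1), (l : ℕ) < k → b l < ρ)
        then (ENNReal.ofReal (wfn ν ρ) - ENNReal.ofReal (wfn ν (b j))) else 0)
      = HL (b j) (fun l => b (j.succAbove l)) := by
    intro b
    simp only [hHLdef]
    rw [hmI b]
    exact if_congr (and_congr Iff.rfl (and_congr Iff.rfl (hTr b))) rfl rfl
  have hRrw : ∀ b : Fin (n + 1) → ℝ,
      (if (((Finset.univ.erase i).erase j).fold max 0 (qv (rA n k ρ) b) < b j ∧ b j < ρ
          ∧ ∀ l : Fin (n + 1), (l : ℕ) < k → b l < ρ)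
        then (ENNReal.ofReal (wfn ν (b j))
          - ENNReal.ofReal (wfn ν (((Finset.univ.erase i).erase j).fold max 0
              (qv (rA n k ρ) b)))) else 0)
      = HR (b j) (fun l => b (j.succAbove l)) := by
    intro b
    simp only [hHRdef]
    rw [hmI b]
    exact if_congr (and_congr Iff.rfl (and_congr Iff.rfl (hTr b))) rfl rfl
  calc ∫⁻ b, (if (((Finset.univ.erase i).erase j).fold max 0 (qv (rA n k ρ) b) < b j ∧ b j < ρ
          ∧ ∀ l : Fin (n + 1), (l : ℕ) < k → b l < ρ)
        then (ENNReal.ofReal (wfn ν ρ) - ENNReal.ofReal (wfn ν (b j))) else 0)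
        ∂(Measure.pi fun _ : Fin (n + 1) => ν)
      = ∫⁻ y, ∫⁻ t, HL t y ∂ν ∂(Measure.pi fun _ : Fin n => ν) := by
        rw [← FUB (ν := ν) j HL hHLmeas]
        exact lintegral_congr fun b => hLrw b
    _ ≤ ∫⁻ y, ∫⁻ t, HR t y ∂ν ∂(Measure.pi fun _ : Fin n => ν) := by
        refine lintegral_mono fun y => ?_
        by_cases hTy : TrY y
        · have hL1 : ∀ t, HL t y = (Set.Ioo (MY y) ρ).indicator
              (fun t => ENNReal.ofReal (wfn ν ρ) - ENNReal.ofReal (wfn ν t)) t := by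
            intro t
            simp only [hHLdef]
            by_cases h : MY y < t ∧ t < ρ
            · rw [Set.indicator_of_mem (Set.mem_Ioo.2 h)]
              exact if_pos ⟨h.1, h.2, hTy⟩
            · rw [Set.indicator_of_notMem (fun hcon => h (Set.mem_Ioo.1 hcon))]
              exact if_neg (fun hcon => h ⟨hcon.1, hcon.2.1⟩)
          have hR1 : ∀ t, HR t y = (Set.Ioo (MY y) ρ).indicator
              (fun t => ENNReal.ofReal (wfn ν t) - ENNReal.ofReal (wfn ν (MY y))) t := by
            intro t
            simp only [hHRdef]
            by_cases h : MY y < t ∧ t < ρ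
            · rw [Set.indicator_of_mem (Set.mem_Ioo.2 h)]
              exact if_pos ⟨h.1, h.2, hTy⟩
            · rw [Set.indicator_of_notMem (fun hcon => h (Set.mem_Ioo.1 hcon))]
              exact if_neg (fun hcon => h ⟨hcon.1, hcon.2.1⟩)
          rw [lintegral_congr hL1, lintegral_congr hR1,
            lintegral_indicator measurableSet_Ioo, lintegral_indicator measurableSet_Ioo]
          exact key_oned hf0 hν hF hφ hreg hρpos hφρ (MY y) (hMY0 y)
        · have hL0 : ∀ t, HL t y = 0 := fun t => by
            simp only [hHLdef]
            exact if_neg (fun hcon => hTy hcon.2.2)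
          have hR0 : ∀ t, HR t y = 0 := fun t => by
            simp only [hHRdef]
            exact if_neg (fun hcon => hTy hcon.2.2)
          rw [lintegral_congr hL0, lintegral_congr hR0]
    _ = _ := by
        rw [← FUB (ν := ν) j HR hHRmeas]
        exact lintegral_congr fun b => (hRrw b).symm

end C7

set_option maxHeartbeats 1000000 in
theorem ab_testing_eager_is_harmful {n : ℕ} (f : ℝ → ℝ)
    (hf0 : ∀ x, 0 ≤ f x) (hfneg : ∀ x, x < 0 → f x = 0)
    (ν : Measure ℝ) (hν : ν = volume.withDensity fun x => ENNReal.ofReal (f x))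
    [IsProbabilityMeasure ν]
    (F : ℝ → ℝ) (hF : ∀ x, F x = (ν (Set.Iic x)).toReal)
    (φ : ℝ → ℝ) (hφ : ∀ x, φ x = x - (1 - F x) / f x)
    (hreg : MonotoneOn φ (Set.Ici 0))
    (ρ : ℝ) (hρ : 0 ≤ ρ) (hφρ : φ ρ = 0)
    (k : ℕ) (hk : k + 1 ≤ n) :
    ∫⁻ b, ENNReal.ofReal (eagerRev b fun i => if (i : ℕ) < k + 1 then ρ else 0)
        ∂(Measure.pi fun _ : Fin (n + 1) => ν) ≤
      ∫⁻ b, ENNReal.ofReal (eagerRev b fun i => if (i : ℕ) < k then ρ else 0)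
        ∂(Measure.pi fun _ : Fin (n + 1) => ν) := by
  classical
  rcases eq_or_lt_of_le hρ with hρ0 | hρpos
  · -- degenerate case ρ = 0 : both reserve vectors vanish
    rw [← hρ0]
    simp only [ite_self]
    exact le_rfl
  -- main case
  suffices hmain : ∫⁻ b, ENNReal.ofReal (eagerRev b (rA n (k + 1) ρ))
        ∂(Measure.pi fun _ : Fin (n + 1) => ν) ≤
      ∫⁻ b, ENNReal.ofReal (eagerRev b (rA n k ρ))
        ∂(Measure.pi fun _ : Fin (n + 1) => ν) by exact hmain
  set μ := Measure.pi fun _ : Fin (n + 1) => ν with hμdef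
  have hn1 : k < n + 1 := by omega
  set j : Fin (n + 1) := ⟨k, hn1⟩ with hjdef
  have hj : (j : ℕ) = k := rfl
  have hsing : ∀ c : ℝ, ν {c} = 0 := fun c => nu_singleton hν c
  have hIic0 : ν (Set.Iic 0) = 0 := by
    rw [hν, withDensity_apply _ measurableSet_Iic,
      show (volume : Measure ℝ).restrict (Set.Iic 0) = volume.restrict (Set.Iio 0) from
        (Measure.restrict_congr_set Iio_ae_eq_Iic).symm]
    rw [← lintegral_zero (μ := (volume : Measure ℝ).restrict (Set.Iio 0))]
    refine setLIntegral_congr_fun measurableSet_Iio (fun x hx => ?_)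
    rw [hfneg x hx, ENNReal.ofReal_zero]
  -- generic bids
  have haegen : ∀ᵐ b ∂μ, (∀ l, 0 < b l) ∧ (∀ l, b l ≠ ρ) ∧ (∀ l m, l ≠ m → b l ≠ b m) := by
    refine Filter.Eventually.and (ae_all_iff.2 fun l => ?_)
      (Filter.Eventually.and (ae_all_iff.2 fun l => ?_)
        (ae_all_iff.2 fun l => ae_all_iff.2 fun m => ?_))
    · rw [ae_iff]
      have hset : {b : Fin (n + 1) → ℝ | ¬0 < b l} = {b | b l ∈ Set.Iic 0} := by
        ext b; simp [not_lt]
      rw [hset]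
      exact nullA l _ measurableSet_Iic hIic0
    · rw [ae_iff]
      have hset : {b : Fin (n + 1) → ℝ | ¬b l ≠ ρ} = {b | b l ∈ ({ρ} : Set ℝ)} := by
        ext b; simp
      rw [hset]
      exact nullA l _ (measurableSet_singleton ρ) (hsing ρ)
    · by_cases hlm : l = m
      · subst hlm
        exact Filter.Eventually.of_forall fun b hne => absurd rfl hne
      · rw [ae_iff]
        have hset : {b : Fin (n + 1) → ℝ | ¬(l ≠ m → b l ≠ b m)} = {b | b l = b m} := by
          ext b; simp [hlm]
        rw [hset]
        exact nullB l m (Ne.symm hlm) hsing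
  have haej : ∀ᵐ b ∂μ, 0 ≤ b j := by
    filter_upwards [haegen] with b hb
    exact (hb.1 j).le
  -- reduce both sides to sums of threshold payments
  have hlastk : rA n k ρ ⟨n, by omega⟩ = 0 := by
    unfold rA; rw [if_neg (show ¬n < k by omega)]
  have hlastk1 : rA n (k + 1) ρ ⟨n, by omega⟩ = 0 := by
    unfold rA; rw [if_neg (show ¬n < k + 1 by omega)]
  have hrev : ∀ (r : Fin (n + 1) → ℝ), (∀ l, 0 ≤ r l) → (∀ l, r l = 0 ∨ r l = ρ) →
      (r ⟨n, by omega⟩ = 0) →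
      ∫⁻ b, ENNReal.ofReal (eagerRev b r) ∂μ
        = ∑ i : Fin (n + 1), ∫⁻ b,
            (if thr r i b < b i then ENNReal.ofReal (thr r i b) else 0) ∂μ := by
    intro r h0 hv hlast
    rw [← lintegral_finset_sum _ (fun i _ =>
      Measurable.ite (measurableSet_lt (measurable_thr r i) (measurable_pi_apply i))
        ((measurable_thr r i).ennreal_ofReal) measurable_const)]
    refine lintegral_congr_ae ?_
    filter_upwards [haegen] with b hb
    obtain ⟨hb1, hb2, hb3⟩ := hb
    have hbr : ∀ l, b l ≠ r l := fun l => by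
      rcases hv l with h | h
      · rw [h]; exact (hb1 l).ne'
      · rw [h]; exact hb2 l
    rw [eagerRev_eq_sum b r hb1 hb3 hbr ⟨⟨n, by omega⟩, by rw [hlast]; exact (hb1 _).le⟩,
      ENNReal.ofReal_sum_of_nonneg (fun i _ => by
        split
        · exact thr_nonneg r i b (h0 i)
        · exact le_rfl)]
    exact Finset.sum_congr rfl fun i _ => by
      rw [apply_ite ENNReal.ofReal, ENNReal.ofReal_zero]
  have hvals1 : ∀ l : Fin (n + 1), rA n (k + 1) ρ l = 0 ∨ rA n (k + 1) ρ l = ρ := fun l => by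
    unfold rA; split
    · exact Or.inr rfl
    · exact Or.inl rfl
  have hvals0 : ∀ l : Fin (n + 1), rA n k ρ l = 0 ∨ rA n k ρ l = ρ := fun l => by
    unfold rA; split
    · exact Or.inr rfl
    · exact Or.inl rfl
  rw [hrev (rA n (k + 1) ρ) (rA_nonneg hρ) hvals1 hlastk1,
    hrev (rA n k ρ) (rA_nonneg hρ) hvals0 hlastk]
  -- convert to the W-form
  have hP1 : ∀ i : Fin (n + 1),
      ∫⁻ b, (if thr (rA n (k + 1) ρ) i b < b i
          then ENNReal.ofReal (thr (rA n (k + 1) ρ) i b) else 0) ∂μ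
        = ∫⁻ b, ENNReal.ofReal (wfn ν (thr (rA n (k + 1) ρ) i b)) ∂μ :=
    fun i => P_eq (rA n (k + 1) ρ) (rA_nonneg hρ) i
  have hP0 : ∀ i : Fin (n + 1),
      ∫⁻ b, (if thr (rA n k ρ) i b < b i
          then ENNReal.ofReal (thr (rA n k ρ) i b) else 0) ∂μ
        = ∫⁻ b, ENNReal.ofReal (wfn ν (thr (rA n k ρ) i b)) ∂μ :=
    fun i => P_eq (rA n k ρ) (rA_nonneg hρ) i
  rw [Finset.sum_congr rfl (fun i _ => hP1 i), Finset.sum_congr rfl (fun i _ => hP0 i)]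
  -- notation for the two per-bidder expected payments
  set PW1 : Fin (n + 1) → ℝ≥0∞ :=
    fun i => ∫⁻ b, ENNReal.ofReal (wfn ν (thr (rA n (k + 1) ρ) i b)) ∂μ with hPW1def
  set PW0 : Fin (n + 1) → ℝ≥0∞ :=
    fun i => ∫⁻ b, ENNReal.ofReal (wfn ν (thr (rA n k ρ) i b)) ∂μ with hPW0def
  have hmeasW1 : ∀ i : Fin (n + 1), Measurable fun b : Fin (n + 1) → ℝ =>
      ENNReal.ofReal (wfn ν (thr (rA n (k + 1) ρ) i b)) := fun i =>
    ((measurable_wfn.comp (measurable_thr _ i)).ennreal_ofReal)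
  have hmeasW0 : ∀ i : Fin (n + 1), Measurable fun b : Fin (n + 1) → ℝ =>
      ENNReal.ofReal (wfn ν (thr (rA n k ρ) i b)) := fun i =>
    ((measurable_wfn.comp (measurable_thr _ i)).ennreal_ofReal)
  -- treated bidders: no change
  have hC1 : ∀ i : Fin (n + 1), (i : ℕ) < k → PW1 i = PW0 i := by
    intro i hi
    refine lintegral_congr_ae ?_
    filter_upwards [haej] with b hbj
    rw [thr_treated hj hi b hbj]
  -- bidder j : gain
  have hWE2 : ∀ b : Fin (n + 1) → ℝ, ENNReal.ofReal (wfn ν (thr (rA n k ρ) j b))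
      ≤ ENNReal.ofReal (wfn ν (thr (rA n (k + 1) ρ) j b)) := by
    intro b
    rw [thr_j0 hj b, thr_j1 hj b]
    set M := (Finset.univ.erase j).fold max 0 (qv (rA n k ρ) b) with hM
    rcases le_total ρ M with h | h
    · rw [max_eq_right h]
    · rw [max_eq_left h]
      exact ENNReal.ofReal_le_ofReal
        (w_mono hf0 hν hF hφ hreg hρpos hφρ (fold_max_nonneg _ _) h le_rfl)
  set G : ℝ≥0∞ := ∫⁻ b, (ENNReal.ofReal (wfn ν (thr (rA n (k + 1) ρ) j b))
    - ENNReal.ofReal (wfn ν (thr (rA n k ρ) j b))) ∂μ with hGdef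
  have hgainid : PW1 j = PW0 j + G := by
    rw [hPW1def, hPW0def, hGdef, ← lintegral_add_left (hmeasW0 j)]
    exact lintegral_congr fun b => (add_tsub_cancel_of_le (hWE2 b)).symm
  -- untreated bidders: loss
  set L : Fin (n + 1) → ℝ≥0∞ :=
    fun i => ∫⁻ b, (ENNReal.ofReal (wfn ν (thr (rA n k ρ) i b))
      - ENNReal.ofReal (wfn ν (thr (rA n (k + 1) ρ) i b))) ∂μ with hLdef
  have hWE3 : ∀ i : Fin (n + 1), k < (i : ℕ) → ∀ᵐ b ∂μ,
      ENNReal.ofReal (wfn ν (thr (rA n (k + 1) ρ) i b))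
        ≤ ENNReal.ofReal (wfn ν (thr (rA n k ρ) i b)) := by
    intro i hik
    filter_upwards [haej] with b hbj
    rcases thr_untreated hj hik b hbj with heq | ⟨hle, hρle⟩
    · rw [heq]
    · exact ENNReal.ofReal_le_ofReal
        (w_mono hf0 hν hF hφ hreg hρpos hφρ
          (thr_nonneg _ i b (rA_nonneg hρ i)) hle hρle)
  have hlossid : ∀ i : Fin (n + 1), k < (i : ℕ) → PW0 i = PW1 i + L i := by
    intro i hik
    rw [hPW1def, hPW0def, hLdef, ← lintegral_add_left (hmeasW1 i)]
    refine lintegral_congr_ae ?_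
    filter_upwards [hWE3 i hik] with b hb
    exact (add_tsub_cancel_of_le hb).symm
  -- the per-bidder bookkeeping identity
  have hkey : ∀ i : Fin (n + 1),
      PW1 i + (if k < (i : ℕ) then L i else 0) = PW0 i + (if i = j then G else 0) := by
    intro i
    rcases lt_trichotomy (i : ℕ) k with h | h | h
    · rw [if_neg (by omega), if_neg (fun hc => by rw [hc, hj] at h; omega), hC1 i h]
    · have hij : i = j := Fin.ext (by rw [h, hj])
      rw [hij, if_neg (by rw [hj]; omega), if_pos rfl, add_zero, hgainid]
    · rw [if_pos h, if_neg (fun hc => by rw [hc, hj] at h; omega), hlossid i h, add_zero]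
  have hsumeq : (∑ i, PW1 i) + (∑ i : Fin (n + 1), if k < (i : ℕ) then L i else 0)
      = (∑ i, PW0 i) + G := by
    have h1 : ∑ i : Fin (n + 1), (PW1 i + if k < (i : ℕ) then L i else 0)
        = ∑ i : Fin (n + 1), (PW0 i + if i = j then G else 0) :=
      Finset.sum_congr rfl fun i _ => hkey i
    rw [Finset.sum_add_distrib, Finset.sum_add_distrib] at h1
    rw [h1, Finset.sum_ite_eq' Finset.univ j (fun _ => G), if_pos (Finset.mem_univ j)]
  -- measurability of the gain indicator
  have hTrmeas : MeasurableSet {b : Fin (n + 1) → ℝ | ∀ l : Fin (n + 1), (l : ℕ) < k → b l < ρ} := by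
    have hset : {b : Fin (n + 1) → ℝ | ∀ l : Fin (n + 1), (l : ℕ) < k → b l < ρ}
        = ⋂ l : Fin (n + 1), {b : Fin (n + 1) → ℝ | (l : ℕ) < k → b l < ρ} := by
      ext b; simp [Set.mem_iInter]
    rw [hset]
    refine MeasurableSet.iInter fun l => ?_
    by_cases hl : (l : ℕ) < k
    · have : {b : Fin (n + 1) → ℝ | (l : ℕ) < k → b l < ρ} = {b | b l < ρ} := by
        ext b; simp [hl]
      rw [this]
      exact measurableSet_lt (measurable_pi_apply l) measurable_const
    · have : {b : Fin (n + 1) → ℝ | (l : ℕ) < k → b l < ρ} = Set.univ := by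
        ext b; simp [hl]
      rw [this]; exact MeasurableSet.univ
  have hmfold : ∀ i : Fin (n + 1), Measurable fun b : Fin (n + 1) → ℝ =>
      ((Finset.univ.erase i).erase j).fold max 0 (qv (rA n k ρ) b) := fun i =>
    measurable_fold_max_s12 _ (fun l b => qv (rA n k ρ) b l) (fun l => measurable_qv _ l)
  have hmeasindG : ∀ i : Fin (n + 1), Measurable fun b : Fin (n + 1) → ℝ =>
      (if (((Finset.univ.erase i).erase j).fold max 0 (qv (rA n k ρ) b) < b i ∧ b i < ρ
          ∧ ∀ l : Fin (n + 1), (l : ℕ) < k → b l < ρ)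
        then (ENNReal.ofReal (wfn ν ρ) - ENNReal.ofReal (wfn ν (b i))) else 0) := by
    intro i
    refine Measurable.ite ?_ (Measurable.sub measurable_const
      ((measurable_wfn.comp (measurable_pi_apply i)).ennreal_ofReal)) measurable_const
    refine MeasurableSet.inter (measurableSet_lt (hmfold i) (measurable_pi_apply i))
      (MeasurableSet.inter (measurableSet_lt (measurable_pi_apply i) measurable_const)
        hTrmeas)
  -- bounding the gain by the sum of losses
  have hGle : G ≤ ∑ i ∈ Finset.univ.filter (fun l : Fin (n + 1) => k < (l : ℕ)), L i := by
    have hstep1 : G ≤ ∫⁻ b, (∑ i ∈ Finset.univ.filter (fun l : Fin (n + 1) => k < (l : ℕ)),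
        (if (((Finset.univ.erase i).erase j).fold max 0 (qv (rA n k ρ) b) < b i ∧ b i < ρ
            ∧ ∀ l : Fin (n + 1), (l : ℕ) < k → b l < ρ)
          then (ENNReal.ofReal (wfn ν ρ) - ENNReal.ofReal (wfn ν (b i))) else 0)) ∂μ := by
      rw [hGdef]
      refine lintegral_mono_ae ?_
      filter_upwards [haegen] with b hb
      exact gain_le hj hk hρpos b hb.1 hb.2.2
    have hstep2 : ∫⁻ b, (∑ i ∈ Finset.univ.filter (fun l : Fin (n + 1) => k < (l : ℕ)),
        (if (((Finset.univ.erase i).erase j).fold max 0 (qv (rA n k ρ) b) < b i ∧ b i < ρ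
            ∧ ∀ l : Fin (n + 1), (l : ℕ) < k → b l < ρ)
          then (ENNReal.ofReal (wfn ν ρ) - ENNReal.ofReal (wfn ν (b i))) else 0)) ∂μ
        = ∑ i ∈ Finset.univ.filter (fun l : Fin (n + 1) => k < (l : ℕ)),
          ∫⁻ b, (if (((Finset.univ.erase i).erase j).fold max 0 (qv (rA n k ρ) b) < b i
              ∧ b i < ρ ∧ ∀ l : Fin (n + 1), (l : ℕ) < k → b l < ρ)
            then (ENNReal.ofReal (wfn ν ρ) - ENNReal.ofReal (wfn ν (b i))) else 0) ∂μ :=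
      lintegral_finset_sum _ (fun i _ => hmeasindG i)
    refine le_trans hstep1 (le_trans (le_of_eq hstep2) (Finset.sum_le_sum fun i hiU => ?_))
    have hik : k < (i : ℕ) := (Finset.mem_filter.1 hiU).2
    -- swap coordinates i and j
    have hswap : ∫⁻ b, (if (((Finset.univ.erase i).erase j).fold max 0 (qv (rA n k ρ) b) < b i
          ∧ b i < ρ ∧ ∀ l : Fin (n + 1), (l : ℕ) < k → b l < ρ)
        then (ENNReal.ofReal (wfn ν ρ) - ENNReal.ofReal (wfn ν (b i))) else 0) ∂μ
        = ∫⁻ b, (if (((Finset.univ.erase i).erase j).fold max 0 (qv (rA n k ρ) b) < b j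
          ∧ b j < ρ ∧ ∀ l : Fin (n + 1), (l : ℕ) < k → b l < ρ)
        then (ENNReal.ofReal (wfn ν ρ) - ENNReal.ofReal (wfn ν (b j))) else 0) ∂μ := by
      rw [← lint_perm (ν := ν) (Equiv.swap i j) _ (hmeasindG i)]
      exact lintegral_congr fun b => swap_ind hik hj b
    rw [hswap]
    refine le_trans (C7 hf0 hν hF hφ hreg hρpos hφρ hj hik) ?_
    rw [hLdef]
    exact lintegral_mono fun b => loss_ge hj hik b
  -- conclude
  by_cases htop : (∑ i, PW0 i) = ⊤
  · rw [htop]; exact le_top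
  · have hLsum_le : (∑ i : Fin (n + 1), if k < (i : ℕ) then L i else 0) ≤ ∑ i, PW0 i := by
      refine Finset.sum_le_sum fun i _ => ?_
      by_cases h : k < (i : ℕ)
      · rw [if_pos h, hlossid i h]
        exact le_add_self
      · rw [if_neg h]; exact zero_le
    have hLne : (∑ i : Fin (n + 1), if k < (i : ℕ) then L i else 0) ≠ ⊤ :=
      fun hc => htop (top_le_iff.1 (hc ▸ hLsum_le))
    have hfinal : (∑ i, PW1 i) + (∑ i : Fin (n + 1), if k < (i : ℕ) then L i else 0)
        ≤ (∑ i, PW0 i) + (∑ i : Fin (n + 1), if k < (i : ℕ) then L i else 0) := by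
      rw [hsumeq]
      refine add_le_add_right ?_ _
      refine le_trans hGle ?_
      rw [Finset.sum_filter]
    exact (ENNReal.add_le_add_iff_right hLne).1 hfinal
end
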